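/- arXiv:1902.02231 — 7 statements merged into one kernel-verified Lean document; each statement's English description precedes it below -/
import Mathlib

section
/- If G is a minor-obstruction for the class of k-apex sub-unicyclic graphs, then G has no bridges. -/
open SimpleGraph

/-- A graph is sub-unicyclic if it contains at most one cycle:
any two cycles have the same edge set. -/
def SubUnicyclic {V : Type} (G : SimpleGraph V) : Prop :=
  ∀ ⦃u w : V⦄ (c : G.Walk u u) (c' : G.Walk w w),
    c.IsCycle → c'.IsCycle → ∀ e, e ∈ c.edges ↔ e ∈ c'.edges

/-- `H` is a minor of `G`: branch decomposition via a partial map. -/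
def IsMinor {W V : Type} (H : SimpleGraph W) (G : SimpleGraph V) : Prop :=
  ∃ f : V → Option W,
    (∀ w : W, (G.induce {v | f v = some w}).Connected) ∧
    (∀ w₁ w₂ : W, H.Adj w₁ w₂ →
      ∃ v₁ v₂ : V, f v₁ = some w₁ ∧ f v₂ = some w₂ ∧ G.Adj v₁ v₂)

/-- `G` is `k`-apex sub-unicyclic. -/
def KApexSub (k : ℕ) {V : Type} (G : SimpleGraph V) : Prop :=
  ∃ S : Set V, S.ncard ≤ k ∧ SubUnicyclic (G.induce Sᶜ)

/-- `G` is a minor-obstruction for the class of `k`-apex sub-unicyclic graphs. -/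
def ObstructionSub (k : ℕ) {V : Type} (G : SimpleGraph V) : Prop :=
  ¬ KApexSub k G ∧
  ∀ (W : Type) (H : SimpleGraph W), IsMinor H G → ¬ IsMinor G H → KApexSub k H

/-- A pseudoforest: every connected component is sub-unicyclic. -/
def Pseudoforest {V : Type} (G : SimpleGraph V) : Prop :=
  ∀ C : G.ConnectedComponent, SubUnicyclic (G.induce C.supp)

def KApexPseudo (k : ℕ) {V : Type} (G : SimpleGraph V) : Prop :=
  ∃ S : Set V, S.ncard ≤ k ∧ Pseudoforest (G.induce Sᶜ)

def ObstructionPseudo (k : ℕ) {V : Type} (G : SimpleGraph V) : Prop :=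
  ¬ KApexPseudo k G ∧
  ∀ (W : Type) (H : SimpleGraph W), IsMinor H G → ¬ IsMinor G H → KApexPseudo k H

/-- The disjoint union of two triangles. -/
def twoK3 : SimpleGraph (Fin 6) :=
  SimpleGraph.fromRel (fun a b => a.val / 3 = b.val / 3)

/-- `K₄` minus an edge. -/
def K4minus : SimpleGraph (Fin 4) :=
  (⊤ : SimpleGraph (Fin 4)).deleteEdges {s(0, 1)}

/-- The butterfly graph: two triangles `{0,1,2}` and `{2,3,4}` sharing the center `2`. -/
def butterfly : SimpleGraph (Fin 5) :=
  SimpleGraph.fromRel (fun a b =>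
    (a.val ≤ 1 ∧ b.val ≤ 1) ∨ (3 ≤ a.val ∧ 3 ≤ b.val) ∨ a = 2 ∨ b = 2)

def butterflyCenter : Fin 5 := 2

/-- The disjoint union of `n` triangles. -/
def kTriangles (n : ℕ) : SimpleGraph (Fin n × Fin 3) :=
  SimpleGraph.fromRel (fun a b => a.1 = b.1)

/-- Attach a fresh butterfly to `G` by identifying one of its extremal vertices with `v`.
New vertices: `inr 0` (extremal, same triangle as `v`), `inr 1` (center),
`inr 2`, `inr 3` (extremal, second triangle). -/
def attachButterfly {V : Type} (G : SimpleGraph V) (v : V) : SimpleGraph (V ⊕ Fin 4) :=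
  SimpleGraph.fromRel (fun a b =>
    (∃ x y : V, a = Sum.inl x ∧ b = Sum.inl y ∧ G.Adj x y) ∨
    (a = Sum.inl v ∧ b = Sum.inr 0) ∨ (a = Sum.inl v ∧ b = Sum.inr 1) ∨
    (a = Sum.inr 0 ∧ b = Sum.inr 1) ∨ (a = Sum.inr 2 ∧ b = Sum.inr 3) ∨
    (a = Sum.inr 2 ∧ b = Sum.inr 1) ∨ (a = Sum.inr 3 ∧ b = Sum.inr 1))

/-- The class `Z_k` of `k`-butterfly-cacti, together with its set of central vertices. -/
inductive IsBCactus : ℕ → ∀ {V : Type}, SimpleGraph V → Set V → Prop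
  | base {V : Type} (G : SimpleGraph V) (e : G ≃g butterfly) :
      IsBCactus 1 G {e.symm butterflyCenter}
  | step {V V' : Type} (k : ℕ) (G : SimpleGraph V) (G' : SimpleGraph V') (S' : Set V')
      (v : V') (hv : v ∉ S') (h' : IsBCactus k G' S')
      (e : G ≃g attachButterfly G' v) :
      IsBCactus (k + 1) G (⇑e.symm '' (Sum.inl '' S' ∪ {Sum.inr 1}))

/-- `x` is a cut-vertex of (the connected graph) `G`. -/
def IsCutVertex {V : Type} (G : SimpleGraph V) (x : V) : Prop :=
  ¬ (G.induce {u | u ≠ x}).Preconnected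

def Biconnected {V : Type} (G : SimpleGraph V) : Prop :=
  G.Connected ∧ ∀ x : V, (G.induce {u | u ≠ x}).Connected

/-- `G` is nearly-biconnected: biconnected, or has a unique cut-vertex `x` splitting it
into a biconnected part and a triangle. -/
def NearlyBiconnected {V : Type} (G : SimpleGraph V) : Prop :=
  Biconnected G ∨
  ∃ (x : V) (A B : Set V),
    IsCutVertex G x ∧ (∀ y, IsCutVertex G y → y = x) ∧
    A ∪ B = Set.univ ∧ A ∩ B = {x} ∧
    (∀ a ∈ A, ∀ b ∈ B, G.Adj a b → a = x ∨ b = x) ∧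
    Biconnected (G.induce A) ∧
    Nonempty (G.induce B ≃g (⊤ : SimpleGraph (Fin 3)))

/-- `B` is (the vertex set of) a block of `G`: a maximal connected set with no cut-vertex. -/
def IsBlockSet {V : Type} (G : SimpleGraph V) (B : Set V) : Prop :=
  B.Nonempty ∧ (G.induce B).Connected ∧
  (∀ x : V, (G.induce (B \ {x})).Preconnected) ∧
  ∀ B' : Set V, B ⊆ B' → (G.induce B').Connected →
    (∀ x : V, (G.induce (B' \ {x})).Preconnected) → B' = B

/-- A cactus graph: no `K₄⁻` minor. -/
def IsCactus {V : Type} (G : SimpleGraph V) : Prop := ¬ IsMinor K4minus G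

/-- The chain of four consecutively glued triangles
`{0,1,2}, {2,3,4}, {4,5,6}, {6,7,8}`. -/
def O11 : SimpleGraph (Fin 9) :=
  SimpleGraph.fromRel (fun a b => ∃ i : Fin 4,
    2 * i.val ≤ a.val ∧ a.val ≤ 2 * i.val + 2 ∧ 2 * i.val ≤ b.val ∧ b.val ≤ 2 * i.val + 2)

/-- a minor-obstruction for `k`-apex sub-unicyclic graphs has no bridges. -/
theorem obstruction_no_bridge {V : Type} [Finite V] (k : ℕ) (G : SimpleGraph V)
    (h : ObstructionSub k G) : ∀ e ∈ G.edgeSet, ¬ G.IsBridge e := by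
  classical
  rintro e he hbr
  set H := G.deleteEdges {e} with hH
  -- H is a minor of G
  have hminor : IsMinor H G := by
    refine ⟨fun v => some v, ?_, ?_⟩
    · intro w
      rw [SimpleGraph.connected_iff]
      refine ⟨?_, ⟨⟨w, rfl⟩⟩⟩
      intro a b
      have hab : a = b := Subtype.ext (Option.some_injective _ (a.2.trans b.2.symm))
      exact hab ▸ SimpleGraph.Reachable.refl _
    · intro w₁ w₂ hadj
      exact ⟨w₁, w₂, rfl, rfl, hadj.1⟩
  -- G is not a minor of H (edge counting)
  have hnotminor : ¬ IsMinor G H := by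
    rintro ⟨f, hconn, hadj⟩
    have key : ∀ E ∈ G.edgeSet, ∃ E' : Sym2 V, E' ∈ H.edgeSet ∧
        Sym2.map f E' = Sym2.map some E := by
      intro E hE
      induction E with
      | _ w₁ w₂ =>
        obtain ⟨v₁, v₂, h₁, h₂, hvadj⟩ := hadj w₁ w₂ hE
        exact ⟨s(v₁, v₂), hvadj, by simp [h₁, h₂]⟩
    let F : G.edgeSet → H.edgeSet := fun E => ⟨(key E E.2).choose, (key E E.2).choose_spec.1⟩
    have hFinj : Function.Injective F := by
      intro E₁ E₂ hFeq
      have h1 := (key E₁ E₁.2).choose_spec.2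
      have h2 := (key E₂ E₂.2).choose_spec.2
      have hcc : (key E₁ E₁.2).choose = (key E₂ E₂.2).choose := congrArg Subtype.val hFeq
      apply Subtype.ext
      apply Sym2.map.injective (Option.some_injective V)
      rw [← h1, ← h2, hcc]
    have hHsub : H.edgeSet ⊂ G.edgeSet := by
      constructor
      · rw [hH, SimpleGraph.edgeSet_deleteEdges]
        exact Set.diff_subset
      · intro hsubE
        have hmem : e ∈ H.edgeSet := hsubE he
        rw [hH, SimpleGraph.edgeSet_deleteEdges] at hmem
        exact hmem.2 rfl
    have hlt : H.edgeSet.ncard < G.edgeSet.ncard :=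
      Set.ncard_lt_ncard hHsub (Set.toFinite _)
    have hle : G.edgeSet.ncard ≤ H.edgeSet.ncard := by
      rw [← Nat.card_coe_set_eq, ← Nat.card_coe_set_eq]
      exact Nat.card_le_card_of_injective F hFinj
    omega
  obtain ⟨S, hS, hsub⟩ := h.2 V H hminor hnotminor
  apply h.1
  refine ⟨S, hS, ?_⟩
  have hbridge := (SimpleGraph.isBridge_iff_forall_cycle_notMem he).mp hbr
  have trans : ∀ {u : ↥(Sᶜ)} (c : (G.induce Sᶜ).Walk u u), c.IsCycle →
      ∀ a ∈ c.edges, a ∈ (H.induce Sᶜ).edgeSet := by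
    intro u c hc a ha
    have hcg : (c.map (SimpleGraph.Embedding.induce Sᶜ).toHom).IsCycle :=
      hc.map Subtype.val_injective
    have hne : Sym2.map (Subtype.val : ↥(Sᶜ) → V) a ≠ e := by
      intro heq
      apply hbridge _ hcg
      rw [← heq, SimpleGraph.Walk.edges_map]
      exact List.mem_map_of_mem ha
    have h1 : a ∈ (G.induce Sᶜ).edgeSet := c.edges_subset_edgeSet ha
    revert h1 hne
    refine Sym2.ind (fun x y hne h1 => ?_) a
    rw [SimpleGraph.mem_edgeSet] at h1 ⊢
    show H.Adj ↑x ↑y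
    rw [hH, SimpleGraph.deleteEdges_adj]
    exact ⟨h1, by simpa using hne⟩
  intro u w c c' hc hc' a
  have heq := hsub (c.transfer (H.induce Sᶜ) (trans c hc))
    (c'.transfer (H.induce Sᶜ) (trans c' hc'))
    (hc.transfer _) (hc'.transfer _) a
  rwa [SimpleGraph.Walk.edges_transfer, SimpleGraph.Walk.edges_transfer] at heq
end

section
/- If G is a minor-obstruction for the class of k-apex sub-unicyclic graphs and v is a vertex of G of degree 2, then the two neighbors of v are adjacent. -/
open SimpleGraph

private lemma induce_singleton_connected' {V : Type} (G : SimpleGraph V) (x : V) :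
    (G.induce {x}).Connected := by
  rw [SimpleGraph.connected_iff]
  refine ⟨?_, ⟨⟨x, rfl⟩⟩⟩
  rintro ⟨p, hp⟩ ⟨q, hq⟩
  simp only [Set.mem_singleton_iff] at hp hq
  subst hp; subst hq
  rfl

private lemma induce_pair_connected' {V : Type} {G : SimpleGraph V} {x y : V}
    (hxy : G.Adj x y) : (G.induce {x, y}).Connected := by
  rw [SimpleGraph.connected_iff]
  refine ⟨?_, ⟨⟨x, by simp⟩⟩⟩
  rintro ⟨p, hp⟩ ⟨q, hq⟩
  simp only [Set.mem_insert_iff, Set.mem_singleton_iff] at hp hq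
  rcases hp with rfl | rfl <;> rcases hq with rfl | rfl
  · rfl
  · exact SimpleGraph.Adj.reachable (by exact hxy)
  · exact SimpleGraph.Adj.reachable (by exact hxy.symm)
  · rfl


private lemma mem_support_of_mem_edge' {X : Type} {Λ : SimpleGraph X} {u w : X}
    (p : Λ.Walk u w) {e : Sym2 X} (he : e ∈ p.edges) {t : X} (ht : t ∈ e) : t ∈ p.support := by
  induction e using Sym2.ind with
  | _ x y =>
    rcases Sym2.mem_iff.mp ht with rfl | rfl
    · exact p.fst_mem_support_of_mem_edges he
    · exact p.snd_mem_support_of_mem_edges he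

private lemma sym2_map_injOn' {X Y : Type} (ψ : X → Y) (P : X → Prop)
    (hinj : ∀ x y : X, P x → P y → ψ x = ψ y → x = y) :
    ∀ e f : Sym2 X, (∀ t ∈ e, P t) → (∀ t ∈ f, P t) →
      Sym2.map ψ e = Sym2.map ψ f → e = f := by
  intro e f
  induction e using Sym2.ind with
  | _ x y =>
    induction f using Sym2.ind with
    | _ x' y' =>
      intro he hf hmap
      rw [Sym2.map_pair_eq, Sym2.map_pair_eq, Sym2.eq_iff] at hmap
      have hx := he x (by simp)
      have hy := he y (by simp)
      have hx' := hf x' (by simp)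
      have hy' := hf y' (by simp)
      rw [Sym2.eq_iff]
      rcases hmap with ⟨h1, h2⟩ | ⟨h1, h2⟩
      · exact Or.inl ⟨hinj x x' hx hx' h1, hinj y y' hy hy' h2⟩
      · exact Or.inr ⟨hinj x y' hx hy' h1, hinj y x' hy hx' h2⟩

private lemma walk_push' {X Y : Type} {Λ : SimpleGraph X} {M : SimpleGraph Y}
    (ψ : X → Y) (P : X → Prop)
    (hhom : ∀ x y : X, P x → P y → Λ.Adj x y → M.Adj (ψ x) (ψ y)) :
    ∀ {u w : X} (p : Λ.Walk u w), (∀ x ∈ p.support, P x) →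
      ∃ q : M.Walk (ψ u) (ψ w), q.support = p.support.map ψ ∧
        q.edges = p.edges.map (Sym2.map ψ) := by
  intro u w p
  induction p with
  | nil => intro _; exact ⟨Walk.nil, by simp, by simp⟩
  | @cons u' v' w' h p ih =>
    intro hs
    obtain ⟨q, hq1, hq2⟩ := ih (fun x hx => hs x (by simp [hx]))
    refine ⟨Walk.cons (hhom u' v' (hs u' (by simp))
      (hs v' (by simp [Walk.start_mem_support])) h) q, ?_, ?_⟩
    · simp [hq1]
    · simp [hq2]

private lemma cycle_push' {X Y : Type} {Λ : SimpleGraph X} {M : SimpleGraph Y}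
    (ψ : X → Y) {u : X} (c : Λ.Walk u u) (hc : c.IsCycle)
    (hinj : ∀ x y : X, x ∈ c.support → y ∈ c.support → ψ x = ψ y → x = y)
    {q : M.Walk (ψ u) (ψ u)} (hs : q.support = c.support.map ψ)
    (he : q.edges = c.edges.map (Sym2.map ψ)) : q.IsCycle := by
  have hlen : q.length = c.length := by
    have h2 := congrArg List.length he
    rwa [List.length_map, Walk.length_edges, Walk.length_edges] at h2
  refine ⟨⟨⟨?_⟩, ?_⟩, ?_⟩
  · rw [he]
    refine hc.edges_nodup.map_on ?_
    intro e he' f hf' hef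
    exact sym2_map_injOn' ψ (· ∈ c.support) hinj e f
      (fun t ht => mem_support_of_mem_edge' c he' ht)
      (fun t ht => mem_support_of_mem_edge' c hf' ht) hef
  · intro hqnil
    rw [hqnil, Walk.length_nil] at hlen
    have := hc.three_le_length
    omega
  · rw [hs, ← List.map_tail]
    refine hc.support_nodup.map_on ?_
    intro x hx y hy hxy
    exact hinj x y (List.mem_of_mem_tail hx) (List.mem_of_mem_tail hy) hxy

private lemma cycle_through_decomp' {X : Type} {Λ : SimpleGraph X} {x₀ u : X}
    (c : Λ.Walk u u) (hc : c.IsCycle) (hx : x₀ ∈ c.support) :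
    ∃ (y z : X), Λ.Adj x₀ y ∧ Λ.Adj x₀ z ∧ y ≠ z ∧
      ∃ r : Λ.Walk z y, x₀ ∉ r.support ∧ r.support.Nodup ∧
        (∀ e, e ∈ c.edges ↔ (e = s(x₀, y) ∨ e = s(x₀, z) ∨ e ∈ r.edges)) := by
  classical
  have hmemiff : ∀ e, e ∈ (c.rotate x₀ hx).edges ↔ e ∈ c.edges :=
    fun e => (c.rotate_edges x₀ hx).mem_iff
  have hd := hc.rotate hx
  revert hmemiff hd
  generalize c.rotate x₀ hx = d
  intro hmemiff hd
  cases d with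
  | nil => exact absurd rfl hd.ne_nil
  | @cons _ y _ h1 p =>
    obtain ⟨z, h2, r, hpr⟩ := Walk.exists_eq_cons_of_ne h1.ne p.reverse
    have hednd := hd.edges_nodup
    rw [Walk.edges_cons, List.nodup_cons] at hednd
    obtain ⟨hhead, hpnd⟩ := hednd
    have hsupnd : p.support.Nodup := by
      have := hd.support_nodup
      rwa [Walk.support_cons, List.tail_cons] at this
    have hpedges : ∀ e, e ∈ p.edges ↔ (e = s(x₀, z) ∨ e ∈ r.edges) := by
      intro e
      rw [show p.edges = p.reverse.edges.reverse by
        rw [Walk.edges_reverse, List.reverse_reverse], List.mem_reverse, hpr,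
        Walk.edges_cons, List.mem_cons]
    have hyz : y ≠ z := by
      rintro rfl
      exact hhead ((hpedges _).mpr (Or.inl rfl))
    have hps : p.support.reverse = x₀ :: r.support := by
      rw [← Walk.support_reverse, hpr, Walk.support_cons]
    have hrev : p.support.reverse.Nodup := List.nodup_reverse.mpr hsupnd
    rw [hps, List.nodup_cons] at hrev
    refine ⟨y, z, h1, h2, hyz, r, hrev.1, hrev.2, ?_⟩
    intro e
    rw [← hmemiff e, Walk.edges_cons, List.mem_cons, hpedges e]

private def PullbackCase {X Y : Type} (Γ : SimpleGraph X) (M : SimpleGraph Y)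
    (x₀ : X) (ψ : X → Y) {u : X} (c : Γ.Walk u u) {w : Y} (d : M.Walk w w) : Prop :=
  ((∀ e ∈ c.edges, ∀ t ∈ e, t ≠ x₀) ∧
    (∀ e', e' ∈ d.edges ↔ ∃ e₀ ∈ c.edges, e' = Sym2.map ψ e₀)) ∨
  (∃ y z : X, Γ.Adj x₀ y ∧ Γ.Adj x₀ z ∧ y ≠ z ∧
    (∀ e, e ∈ c.edges ↔ (e = s(x₀, y) ∨ e = s(x₀, z) ∨ (e ∈ c.edges ∧ ∀ t ∈ e, t ≠ x₀))) ∧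
    (∀ e', e' ∈ d.edges ↔ (e' = s(ψ y, ψ z) ∨
      ∃ e₀, e₀ ∈ c.edges ∧ (∀ t ∈ e₀, t ≠ x₀) ∧ e' = Sym2.map ψ e₀)))

private lemma pullback_mono {X Y : Type} {Γ : SimpleGraph X} {M : SimpleGraph Y}
    {x₀ : X} {ψ : X → Y}
    (hinj : ∀ x y : X, x ≠ x₀ → y ≠ x₀ → ψ x = ψ y → x = y)
    (hnadj : ∀ y z : X, Γ.Adj x₀ y → Γ.Adj x₀ z → y ≠ z → ¬ Γ.Adj y z)
    {u₁ u₂ : X} {c₁ : Γ.Walk u₁ u₁} {c₂ : Γ.Walk u₂ u₂}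
    {w₁ w₂ : Y} {d₁ : M.Walk w₁ w₁} {d₂ : M.Walk w₂ w₂}
    (h₁ : PullbackCase Γ M x₀ ψ c₁ d₁) (h₂ : PullbackCase Γ M x₀ ψ c₂ d₂)
    (hed : ∀ e', e' ∈ d₁.edges → e' ∈ d₂.edges)
    {e : Sym2 X} (he : e ∈ c₁.edges) : e ∈ c₂.edges := by
  have hI := sym2_map_injOn' ψ (· ≠ x₀) hinj
  by_cases hav : ∀ t ∈ e, t ≠ x₀
  · have hmem₁ : Sym2.map ψ e ∈ d₁.edges := by
      rcases h₁ with ⟨_, hchar⟩ | ⟨y, z, hy, hz, hyz, _, hchar⟩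
      · exact (hchar _).mpr ⟨e, he, rfl⟩
      · exact (hchar _).mpr (Or.inr ⟨e, he, hav, rfl⟩)
    have hmem₂ := hed _ hmem₁
    rcases h₂ with ⟨havc₂, hchar⟩ | ⟨y, z, hy, hz, hyz, hcc₂, hchar⟩
    · obtain ⟨e₀, he₀, heq⟩ := (hchar _).mp hmem₂
      have : e = e₀ := hI e e₀ hav (havc₂ e₀ he₀) heq
      rwa [this]
    · rcases (hchar _).mp hmem₂ with heq | ⟨e₀, he₀, hav₀, heq⟩
      · exfalso
        have hyzx : ∀ t ∈ s(y, z), t ≠ x₀ := by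
          intro t ht
          rcases Sym2.mem_iff.mp ht with rfl | rfl
          exacts [hy.ne', hz.ne']
        have heyz : e = s(y, z) :=
          hI e s(y, z) hav hyzx (by rw [heq, Sym2.map_pair_eq])
        exact hnadj y z hy hz hyz (c₁.adj_of_mem_edges (heyz ▸ he))
      · have : e = e₀ := hI e e₀ hav hav₀ heq
        rwa [this]
  · push_neg at hav
    obtain ⟨t, ht, htx⟩ := hav
    rcases h₁ with ⟨havc₁, _⟩ | ⟨y, z, hy, hz, hyz, hcc₁, hchar₁⟩
    · exact absurd (havc₁ e he t ht) (by simpa using htx)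
    have hyzx : ∀ t ∈ s(y, z), t ≠ x₀ := by
      intro t ht
      rcases Sym2.mem_iff.mp ht with rfl | rfl
      exacts [hy.ne', hz.ne']
    have hexy : e = s(x₀, y) ∨ e = s(x₀, z) := by
      rcases (hcc₁ e).mp he with h | h | ⟨_, hfa⟩
      · exact Or.inl h
      · exact Or.inr h
      · exact absurd (hfa t ht) (by simpa using htx)
    have hsm : s(ψ y, ψ z) ∈ d₂.edges := hed _ ((hchar₁ _).mpr (Or.inl rfl))
    rcases h₂ with ⟨havc₂, hchar⟩ | ⟨y', z', hy', hz', hyz', hcc₂, hchar₂⟩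
    · exfalso
      obtain ⟨e₀, he₀, heq⟩ := (hchar _).mp hsm
      have : s(y, z) = e₀ :=
        hI s(y, z) e₀ hyzx (havc₂ e₀ he₀) (by rw [Sym2.map_pair_eq, ← heq])
      exact hnadj y z hy hz hyz (c₂.adj_of_mem_edges (this ▸ he₀))
    · have hyz'x : ∀ t ∈ s(y', z'), t ≠ x₀ := by
        intro t ht
        rcases Sym2.mem_iff.mp ht with rfl | rfl
        exacts [hy'.ne', hz'.ne']
      have hpair : s(y, z) = s(y', z') := by
        rcases (hchar₂ _).mp hsm with heq | ⟨e₀, he₀, hav₀, heq⟩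
        · exact hI s(y, z) s(y', z') hyzx hyz'x
            (by rw [Sym2.map_pair_eq, Sym2.map_pair_eq]; exact heq)
        · exfalso
          have : s(y, z) = e₀ :=
            hI s(y, z) e₀ hyzx hav₀ (by rw [Sym2.map_pair_eq, ← heq])
          exact hnadj y z hy hz hyz (c₂.adj_of_mem_edges (this ▸ he₀))
      rw [Sym2.eq_iff] at hpair
      apply (hcc₂ e).mpr
      rcases hexy with rfl | rfl
      · rcases hpair with ⟨rfl, -⟩ | ⟨rfl, -⟩
        · exact Or.inl rfl
        · exact Or.inr (Or.inl rfl)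
      · rcases hpair with ⟨-, rfl⟩ | ⟨-, rfl⟩
        · exact Or.inr (Or.inl rfl)
        · exact Or.inl rfl

private lemma subUnicyclic_pullback {X Y : Type} {Γ : SimpleGraph X} {M : SimpleGraph Y}
    (x₀ : X) (ψ : X → Y)
    (hinj : ∀ x y : X, x ≠ x₀ → y ≠ x₀ → ψ x = ψ y → x = y)
    (hhom : ∀ x y : X, x ≠ x₀ → y ≠ x₀ → Γ.Adj x y → M.Adj (ψ x) (ψ y))
    (hnadj : ∀ y z : X, Γ.Adj x₀ y → Γ.Adj x₀ z → y ≠ z → ¬ Γ.Adj y z)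
    (hmadj : ∀ y z : X, Γ.Adj x₀ y → Γ.Adj x₀ z → y ≠ z → M.Adj (ψ y) (ψ z))
    (hM : SubUnicyclic M) : SubUnicyclic Γ := by
  have main : ∀ (u₀ : X) (c₀ : Γ.Walk u₀ u₀), c₀.IsCycle →
      ∃ (w₀ : Y) (d₀ : M.Walk w₀ w₀), d₀.IsCycle ∧ PullbackCase Γ M x₀ ψ c₀ d₀ := by
    intro u₀ c₀ hc₀
    by_cases hx : x₀ ∈ c₀.support
    · obtain ⟨y, z, hy, hz, hyz, r, hxr, hrnd, hchar⟩ := cycle_through_decomp' c₀ hc₀ hx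
      have hravoid : ∀ e₀ ∈ r.edges, ∀ t ∈ e₀, t ≠ x₀ :=
        fun e₀ he₀ t ht htx => hxr (htx ▸ mem_support_of_mem_edge' r he₀ ht)
      obtain ⟨q, hq1, hq2⟩ := walk_push' ψ (· ≠ x₀) hhom r
        (fun x hxs hxx => hxr (hxx ▸ hxs))
      refine ⟨ψ y, Walk.cons (hmadj y z hy hz hyz) q, ?_,
        Or.inr ⟨y, z, hy, hz, hyz, ?_, ?_⟩⟩
      · rw [Walk.cons_isCycle_iff]
        constructor
        · rw [Walk.isPath_def, hq1]
          exact hrnd.map_on (fun x hx1 y1 hy1 hxy =>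
            hinj x y1 (fun hh => hxr (hh ▸ hx1)) (fun hh => hxr (hh ▸ hy1)) hxy)
        · intro hmem
          rw [hq2] at hmem
          obtain ⟨e₀, he₀, heq⟩ := List.mem_map.mp hmem
          have hyzx : ∀ t ∈ s(y, z), t ≠ x₀ := by
            intro t ht
            rcases Sym2.mem_iff.mp ht with rfl | rfl
            exacts [hy.ne', hz.ne']
          have : e₀ = s(y, z) := sym2_map_injOn' ψ (· ≠ x₀) hinj e₀ s(y, z)
            (hravoid e₀ he₀) hyzx (by rw [Sym2.map_pair_eq]; exact heq)
          exact hnadj y z hy hz hyz (r.adj_of_mem_edges (this ▸ he₀))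
      · intro e
        constructor
        · intro hce
          rcases (hchar e).mp hce with h | h | h
          · exact Or.inl h
          · exact Or.inr (Or.inl h)
          · exact Or.inr (Or.inr ⟨hce, hravoid e h⟩)
        · rintro (rfl | rfl | ⟨hce, -⟩)
          · exact (hchar _).mpr (Or.inl rfl)
          · exact (hchar _).mpr (Or.inr (Or.inl rfl))
          · exact hce
      · intro e'
        rw [Walk.edges_cons, List.mem_cons, hq2]
        constructor
        · rintro (h | h)
          · exact Or.inl h
          · obtain ⟨e₀, he₀, heq⟩ := List.mem_map.mp h
            exact Or.inr ⟨e₀, (hchar e₀).mpr (Or.inr (Or.inr he₀)), hravoid e₀ he₀, heq.symm⟩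
        · rintro (h | ⟨e₀, hce₀, hav₀, heq⟩)
          · exact Or.inl h
          · refine Or.inr (List.mem_map.mpr ⟨e₀, ?_, heq.symm⟩)
            rcases (hchar e₀).mp hce₀ with h' | h' | h'
            · exact absurd (hav₀ x₀ (by rw [h']; simp) rfl) (fun hh => hh)
            · exact absurd (hav₀ x₀ (by rw [h']; simp) rfl) (fun hh => hh)
            · exact h'
    · have hsupP : ∀ x ∈ c₀.support, x ≠ x₀ := fun x hxs hxx => hx (hxx ▸ hxs)
      obtain ⟨q, hq1, hq2⟩ := walk_push' ψ (· ≠ x₀) hhom c₀ hsupP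
      refine ⟨ψ u₀, q, ?_, Or.inl ⟨?_, ?_⟩⟩
      · exact cycle_push' ψ c₀ hc₀
          (fun x y hx1 hy1 => hinj x y (hsupP x hx1) (hsupP y hy1)) hq1 hq2
      · exact fun e hce t hte hteq => hx (hteq ▸ mem_support_of_mem_edge' c₀ hce hte)
      · intro e'
        rw [hq2]
        constructor
        · intro h'
          obtain ⟨e₀, he₀, heq⟩ := List.mem_map.mp h'
          exact ⟨e₀, he₀, heq.symm⟩
        · rintro ⟨e₀, he₀, heq⟩
          exact List.mem_map.mpr ⟨e₀, he₀, heq.symm⟩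
  intro u w c c' hcyc hcyc'
  obtain ⟨w₁, d₁, hd₁, hcase₁⟩ := main _ c hcyc
  obtain ⟨w₂, d₂, hd₂, hcase₂⟩ := main _ c' hcyc'
  have hed := hM d₁ d₂ hd₁ hd₂
  intro e
  exact ⟨fun h' => pullback_mono hinj hnadj hcase₁ hcase₂ (fun e' => (hed e').mp) h',
    fun h' => pullback_mono hinj hnadj hcase₂ hcase₁ (fun e' => (hed e').mpr) h'⟩

/-- in a minor-obstruction for `k`-apex sub-unicyclic graphs,
the two neighbors of a degree-2 vertex are adjacent. -/
theorem obstruction_degree_two_neighbors_adjacent {V : Type} [Finite V] (k : ℕ)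
    (G : SimpleGraph V) (h : ObstructionSub k G) (v : V)
    (hv : (G.neighborSet v).ncard = 2) :
    ∀ a b : V, G.Adj v a → G.Adj v b → a ≠ b → G.Adj a b := by
  intro a b ha hb hne
  classical
  by_contra hab
  -- the neighbors of v are exactly a and b
  have hNS : ∀ t : V, G.Adj v t → t = a ∨ t = b := by
    have hsub : ({a, b} : Set V) ⊆ G.neighborSet v := by
      rintro t (rfl | rfl)
      exacts [ha, hb]
    have heq : ({a, b} : Set V) = G.neighborSet v := by
      refine Set.eq_of_subset_of_ncard_le hsub ?_ (Set.toFinite _)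
      rw [hv, Set.ncard_pair hne]
    intro t ht
    have ht' : t ∈ G.neighborSet v := ht
    rw [← heq] at ht'
    simpa using ht'
  have hav : a ≠ v := ha.ne'
  have hbv : b ≠ v := hb.ne'
  -- the suppressed graph H on W = V \\ {v}
  let H : SimpleGraph {u : V // u ≠ v} :=
    SimpleGraph.fromRel (fun x y => G.Adj x.1 y.1 ∨ (x.1 = a ∧ y.1 = b))
  let f : V → Option {u : V // u ≠ v} :=
    fun u => if h : u = v then some ⟨a, hav⟩ else some ⟨u, h⟩
  have hfv : f v = some ⟨a, hav⟩ := dif_pos rfl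
  have hfx : ∀ (x : V) (hx : x ≠ v), f x = some ⟨x, hx⟩ := fun x hx => dif_neg hx
  have hminor : IsMinor H G := by
    refine ⟨f, ?_, ?_⟩
    · intro w
      by_cases hw : w = ⟨a, hav⟩
      · subst hw
        have hset : {x | f x = some ⟨a, hav⟩} = ({v, a} : Set V) := by
          ext x
          by_cases hx : x = v
          · subst hx
            simp [hfv]
          · simp only [Set.mem_setOf_eq, hfx x hx, Option.some_inj, Set.mem_insert_iff,
              Set.mem_singleton_iff, Subtype.mk.injEq]
            constructor
            · intro h'; exact Or.inr h'
            · rintro (rfl | rfl)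
              · exact absurd rfl hx
              · rfl
        rw [hset]
        exact induce_pair_connected' ha
      · have hset : {x | f x = some w} = ({w.1} : Set V) := by
          ext x
          by_cases hx : x = v
          · subst hx
            simp only [Set.mem_setOf_eq, hfv, Option.some_inj, Set.mem_singleton_iff]
            constructor
            · intro h'; exact absurd h'.symm hw
            · intro h'; exact absurd (h'.trans rfl) (Ne.symm w.2)
          · simp only [Set.mem_setOf_eq, hfx x hx, Option.some_inj, Set.mem_singleton_iff]
            constructor
            · rintro rfl; rfl
            · intro h'; exact Subtype.ext h'
        rw [hset]
        exact induce_singleton_connected' G w.1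
    · intro w₁ w₂ hw
      have hw' := (SimpleGraph.fromRel_adj _ _ _).mp hw
      obtain ⟨hne12, hrel⟩ := hw'
      rcases hrel with (hg | ⟨h1, h2⟩) | (hg | ⟨h1, h2⟩)
      · exact ⟨w₁.1, w₂.1, by rw [hfx w₁.1 w₁.2], by rw [hfx w₂.1 w₂.2], hg⟩
      · refine ⟨v, w₂.1, ?_, by rw [hfx w₂.1 w₂.2], h2 ▸ hb⟩
        rw [hfv]
        exact congrArg some (Subtype.ext h1.symm)
      · exact ⟨w₁.1, w₂.1, by rw [hfx w₁.1 w₁.2], by rw [hfx w₂.1 w₂.2], hg.symm⟩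
      · refine ⟨w₁.1, v, by rw [hfx w₁.1 w₁.2], ?_, h2 ▸ hb.symm⟩
        rw [hfv]
        exact congrArg some (Subtype.ext h1.symm)
  have hnminor : ¬ IsMinor G H := by
    rintro ⟨g0, hconn, -⟩
    have hne' : ∀ u : V, ∃ w : {u : V // u ≠ v}, g0 w = some u := by
      intro u
      obtain ⟨⟨w, hw⟩⟩ := (hconn u).nonempty
      exact ⟨w, hw⟩
    choose g hg using hne'
    have hginj : Function.Injective fun u => (g u).1 := by
      intro u₁ u₂ h12
      have h3 : g u₁ = g u₂ := Subtype.ext h12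
      have h4 : some u₁ = some u₂ := by rw [← hg u₁, ← hg u₂, h3]
      exact Option.some_injective _ h4
    obtain ⟨u, hu⟩ := Finite.injective_iff_surjective.mp hginj v
    exact (g u).2 hu
  obtain ⟨S, hScard, hSU⟩ := h.2 _ H hminor hnminor
  refine h.1 ⟨Subtype.val '' S, ?_, ?_⟩
  · rw [Set.ncard_image_of_injective S Subtype.val_injective]
    exact hScard
  · -- SubUnicyclic (G.induce (Subtype.val '' S)ᶜ)
    have hvT : v ∈ (Subtype.val '' S)ᶜ := by
      rintro ⟨w, -, hw⟩
      exact w.2 hw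
    have hmemT : ∀ (u : V) (hu : u ≠ v), u ∈ (Subtype.val '' S)ᶜ →
        (⟨u, hu⟩ : {u : V // u ≠ v}) ∈ (Sᶜ : Set {u : V // u ≠ v}) :=
      fun u hu hT hS' => hT ⟨⟨u, hu⟩, hS', rfl⟩
    by_cases h0 : ∀ x : ((Subtype.val '' S)ᶜ : Set V), (x : V) = v
    · -- degenerate case: no cycles at all
      intro u₀ w₀ c₀ c₀' hcyc _ e
      exfalso
      have h3 := hcyc.three_le_length
      have hnil : c₀.edges ≠ [] := by
        intro hn
        have h4 := c₀.length_edges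
        rw [hn] at h4
        simp at h4
        omega
      obtain ⟨e₀, he₀⟩ := List.exists_mem_of_ne_nil _ hnil
      revert he₀
      induction e₀ using Sym2.ind with
      | _ x y =>
        intro he₀
        have hadj : G.Adj x.1 y.1 := c₀.adj_of_mem_edges he₀
        rw [h0 x, h0 y] at hadj
        exact G.irrefl hadj
    · push_neg at h0
      obtain ⟨xh, hxh⟩ := h0
      let z₀ : ↥(Sᶜ : Set {u : V // u ≠ v}) := ⟨⟨xh.1, hxh⟩, hmemT _ hxh xh.2⟩
      let ψ : ((Subtype.val '' S)ᶜ : Set V) → ↥(Sᶜ : Set {u : V // u ≠ v}) :=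
        fun x => if hx : x.1 = v then z₀ else ⟨⟨x.1, hx⟩, hmemT _ hx x.2⟩
      have hψ : ∀ (x : ((Subtype.val '' S)ᶜ : Set V)) (hx : x.1 ≠ v),
          ψ x = ⟨⟨x.1, hx⟩, hmemT _ hx x.2⟩ := fun x hx => dif_neg hx
      let x₀ : ((Subtype.val '' S)ᶜ : Set V) := ⟨v, hvT⟩
      have hvalne : ∀ x : ((Subtype.val '' S)ᶜ : Set V), x ≠ x₀ → x.1 ≠ v :=
        fun x hx h' => hx (Subtype.ext h')
      -- apply the pullback lemma with M := H.induce Sᶜ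
      refine subUnicyclic_pullback x₀ ψ ?_ ?_ ?_ ?_ hSU
      · intro x y hx hy hxy
        rw [hψ x (hvalne x hx), hψ y (hvalne y hy)] at hxy
        apply Subtype.ext
        exact congrArg (Subtype.val ∘ Subtype.val) hxy
      · intro x y hx hy hadj
        have hadj' : G.Adj x.1 y.1 := hadj
        rw [hψ x (hvalne x hx), hψ y (hvalne y hy)]
        show H.Adj _ _
        rw [SimpleGraph.fromRel_adj]
        exact ⟨fun hc => hadj'.ne (congrArg (fun (t : {u : V // u ≠ v}) => t.1) hc), Or.inl (Or.inl hadj')⟩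
      · intro y z hy hz hyz hadj
        have hGy : G.Adj v y.1 := hy
        have hGz : G.Adj v z.1 := hz
        have hGyz : G.Adj y.1 z.1 := hadj
        have hyzval : y.1 ≠ z.1 := fun hc => hyz (Subtype.ext hc)
        rcases hNS _ hGy with hya | hyb <;> rcases hNS _ hGz with hza | hzb
        · exact hyzval (hya.trans hza.symm)
        · exact hab (hya ▸ hzb ▸ hGyz)
        · exact hab (hza ▸ hyb ▸ hGyz).symm
        · exact hyzval (hyb.trans hzb.symm)
      · intro y z hy hz hyz
        have hGy : G.Adj v y.1 := hy
        have hGz : G.Adj v z.1 := hz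
        have hyzval : y.1 ≠ z.1 := fun hc => hyz (Subtype.ext hc)
        rw [hψ y hGy.ne', hψ z hGz.ne']
        show H.Adj _ _
        rw [SimpleGraph.fromRel_adj]
        refine ⟨fun hc => hyzval (congrArg (fun (t : {u : V // u ≠ v}) => t.1) hc), ?_⟩
        rcases hNS _ hGy with hya | hyb <;> rcases hNS _ hGz with hza | hzb
        · exact absurd (hya.trans hza.symm) hyzval
        · exact Or.inl (Or.inr ⟨hya, hzb⟩)
        · exact Or.inr (Or.inr ⟨hza, hyb⟩)
        · exact absurd (hyb.trans hzb.symm) hyzval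
end

section
/- Every edge and every vertex of a minor-obstruction for the class of k-apex sub-unicyclic graphs lies on a cycle. -/
open SimpleGraph

section ObstructionAux

open SimpleGraph Walk

variable {V : Type} {G : SimpleGraph V}

private lemma connected_of_eq_singleton (G : SimpleGraph V) {s : Set V} {a : V} (h : s = {a}) :
    (G.induce s).Connected := by
  subst h
  have : Nonempty ↥({a} : Set V) := ⟨⟨a, rfl⟩⟩
  refine SimpleGraph.Connected.mk fun x y => ?_
  have hxy : x = y := Subtype.ext (x.prop.trans y.prop.symm)
  cases hxy
  exact SimpleGraph.Reachable.refl x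

private lemma minor_deleteEdges_aux (s : Set (Sym2 V)) : IsMinor (G.deleteEdges s) G := by
  refine ⟨fun v => some v,
    fun w => connected_of_eq_singleton G (a := w) (by ext x; simp),
    fun w₁ w₂ h => ⟨w₁, w₂, rfl, rfl, ((SimpleGraph.deleteEdges_adj).mp h).1⟩⟩

private lemma minor_induce_aux (t : Set V) : IsMinor (G.induce t) G := by
  classical
  have hfib : ∀ w : t,
      {v | (if h : v ∈ t then some (⟨v, h⟩ : t) else none) = some w} = {(w : V)} := by
    intro w
    ext x
    simp only [Set.mem_setOf_eq, Set.mem_singleton_iff]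
    constructor
    · intro hx
      split at hx
      · exact congrArg Subtype.val (Option.some_injective _ hx)
      · simp at hx
    · rintro rfl
      simp
  refine ⟨fun v => if h : v ∈ t then some ⟨v, h⟩ else none,
    fun w => connected_of_eq_singleton G (hfib w),
    fun w₁ w₂ h => ⟨w₁, w₂, ?_, ?_, h⟩⟩
  · have : (w₁ : V) ∈ {v | (if h : v ∈ t then some (⟨v, h⟩ : t) else none) = some w₁} := by
      rw [hfib w₁]; rfl
    exact this
  · have : (w₂ : V) ∈ {v | (if h : v ∈ t then some (⟨v, h⟩ : t) else none) = some w₂} := by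
      rw [hfib w₂]; rfl
    exact this

private lemma not_minor_induce_ne [Finite V] (v : V) :
    ¬ IsMinor G (G.induce {u | u ≠ v}) := by
  rintro ⟨f, hconn, -⟩
  have hne : ∀ w : V, ∃ x : {u : V | u ≠ v}, f x = some w := fun w => by
    obtain ⟨⟨x, hx⟩⟩ := (hconn w).nonempty; exact ⟨x, hx⟩
  choose σ hσ using hne
  have hinj : Function.Injective (fun w => (σ w : V)) := by
    intro a b hab
    have h1 := hσ a
    rw [show σ a = σ b from Subtype.ext hab, hσ b] at h1
    exact (Option.some_injective _ h1).symm
  obtain ⟨w, hw⟩ := Finite.injective_iff_surjective.mp hinj v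
  exact (σ w).prop hw

private lemma not_minor_deleteEdges [Finite V] {e : Sym2 V} (he : e ∈ G.edgeSet) :
    ¬ IsMinor G (G.deleteEdges {e}) := by
  rintro ⟨f, hconn, hadj⟩
  have hne : ∀ w : V, ∃ x : V, f x = some w := fun w => by
    obtain ⟨⟨x, hx⟩⟩ := (hconn w).nonempty; exact ⟨x, hx⟩
  choose σ hσ using hne
  have hσinj : Function.Injective σ := by
    intro a b hab
    have h1 := hσ a
    rw [hab, hσ b] at h1
    exact (Option.some_injective _ h1).symm
  have hσsurj : Function.Surjective σ := Finite.injective_iff_surjective.mp hσinj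
  have hadj' : ∀ a b : V, G.Adj a b → (G.deleteEdges {e}).Adj (σ a) (σ b) := by
    intro a b hab
    obtain ⟨v₁, v₂, h1, h2, h3⟩ := hadj a b hab
    obtain ⟨a', rfl⟩ := hσsurj v₁
    obtain ⟨b', rfl⟩ := hσsurj v₂
    rw [hσ a'] at h1
    rw [hσ b'] at h2
    obtain rfl := Option.some_injective _ h1
    obtain rfl := Option.some_injective _ h2
    exact h3
  have hmaps : ∀ d ∈ G.edgeSet, Sym2.map σ d ∈ (G.deleteEdges {e}).edgeSet := by
    intro d hd
    induction d with
    | _ a b =>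
      rw [SimpleGraph.mem_edgeSet] at hd
      simpa using hadj' a b hd
  have hle : G.edgeSet.ncard ≤ (G.deleteEdges {e}).edgeSet.ncard :=
    Set.ncard_le_ncard_of_injOn (Sym2.map σ) hmaps
      ((Sym2.map.injective hσinj).injOn) (Set.toFinite _)
  have hlt : (G.deleteEdges {e}).edgeSet.ncard < G.edgeSet.ncard := by
    apply Set.ncard_lt_ncard
    · rw [SimpleGraph.edgeSet_deleteEdges]
      exact (Set.ssubset_iff_of_subset Set.diff_subset).mpr ⟨e, he, fun h => h.2 rfl⟩
    · exact Set.toFinite _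
  omega

/-- Lift a walk whose support lies in `s` to the induced subgraph on `s`. -/
private def liftWalk {V : Type} {G : SimpleGraph V} (s : Set V) :
    {u v : V} → (p : G.Walk u v) → (h : ∀ x ∈ p.support, x ∈ s) →
      (G.induce s).Walk ⟨u, h u p.start_mem_support⟩ ⟨v, h v p.end_mem_support⟩
  | _, _, Walk.nil, _ => Walk.nil
  | _, _, Walk.cons ha p, h =>
      Walk.cons (by exact ha) (liftWalk s p (fun x hx => h x (by simp [hx])))

private lemma liftWalk_map {V : Type} {G : SimpleGraph V} (s : Set V) :
    ∀ {u v : V} (p : G.Walk u v) (h : ∀ x ∈ p.support, x ∈ s),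
      (liftWalk s p h).map (SimpleGraph.Embedding.induce s).toHom = p
  | _, _, Walk.nil, _ => rfl
  | _, _, Walk.cons ha p, h => by
      rw [liftWalk]
      exact congrArg (Walk.cons ha) (liftWalk_map s p _)

private lemma claim_edge {V : Type} [Finite V] (k : ℕ) (G : SimpleGraph V)
    (h : ObstructionSub k G) {e : Sym2 V} (he : e ∈ G.edgeSet)
    (hno : ∀ (u : V) (c : G.Walk u u), c.IsCycle → e ∉ c.edges) : False := by
  obtain ⟨S, hS, hsub⟩ := h.2 V (G.deleteEdges {e}) (minor_deleteEdges_aux {e})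
    (not_minor_deleteEdges he)
  apply h.1
  refine ⟨S, hS, ?_⟩
  intro u w c c' hc hc' e₀
  have key : ∀ {x : ↥Sᶜ} (p : (G.induce Sᶜ).Walk x x), p.IsCycle →
      ∀ d ∈ p.edges, d ∈ ((G.deleteEdges {e}).induce Sᶜ).edgeSet := by
    intro x p hp d hd
    have hmap : (p.map (SimpleGraph.Embedding.induce Sᶜ).toHom).IsCycle :=
      hp.map Subtype.val_injective
    have hdG : d ∈ (G.induce Sᶜ).edgeSet := p.edges_subset_edgeSet hd
    have hdne : Sym2.map Subtype.val d ≠ e := by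
      intro hde
      apply hno _ _ hmap
      rw [← hde, Walk.edges_map]
      exact List.mem_map_of_mem hd
    induction d with
    | _ a b =>
      rw [SimpleGraph.mem_edgeSet] at hdG ⊢
      have hout : (G.deleteEdges {e}).Adj ↑a ↑b := by
        rw [SimpleGraph.deleteEdges_adj]
        refine ⟨hdG, fun hmem => hdne ?_⟩
        rw [Sym2.map_pair_eq]
        exact hmem
      exact hout
  have := hsub (c.transfer _ (key c hc)) (c'.transfer _ (key c' hc'))
    (hc.transfer _) (hc'.transfer _) e₀
  rwa [Walk.edges_transfer, Walk.edges_transfer] at this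

private lemma claim_vertex {V : Type} [Finite V] (k : ℕ) (G : SimpleGraph V)
    (h : ObstructionSub k G) (v : V)
    (hno : ∀ (u : V) (c : G.Walk u u), c.IsCycle → v ∉ c.support) : False := by
  obtain ⟨S, hS, hsub⟩ := h.2 {u : V // u ≠ v} (G.induce {u | u ≠ v})
    (minor_induce_aux _) (not_minor_induce_ne v)
  apply h.1
  refine ⟨Subtype.val '' S, by
    rwa [Set.ncard_image_of_injective _ Subtype.val_injective], ?_⟩
  set T : Set V := Subtype.val '' S with hT
  intro u w c c' hc hc' e₀
  have key : ∀ {x : ↥Tᶜ} (p : (G.induce Tᶜ).Walk x x), p.IsCycle →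
      ∃ (y : ↥Sᶜ) (r : ((G.induce {u | u ≠ v}).induce Sᶜ).Walk y y), r.IsCycle ∧
        (p.map (SimpleGraph.Embedding.induce Tᶜ).toHom).edges
          = r.edges.map (fun d => Sym2.map Subtype.val (Sym2.map Subtype.val d)) := by
    intro x p hp
    have hpc : (p.map (SimpleGraph.Embedding.induce Tᶜ).toHom).IsCycle :=
      hp.map Subtype.val_injective
    have hsupp1 : ∀ z ∈ (p.map (SimpleGraph.Embedding.induce Tᶜ).toHom).support,
        z ∈ {u | u ≠ v} := by
      intro z hz hzv
      exact hno _ _ hpc (hzv ▸ hz)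
    have hqmap := liftWalk_map _ _ hsupp1
    set q := liftWalk _ _ hsupp1 with hq
    have hqc : q.IsCycle := by
      rw [← Walk.map_isCycle_iff_of_injective
        (f := (SimpleGraph.Embedding.induce {u | u ≠ v}).toHom) Subtype.val_injective]
      rw [hqmap]
      exact hpc
    have hsupp2 : ∀ z ∈ q.support, z ∈ Sᶜ := by
      intro z hz hzS
      have h1 : (z : V) ∈ (p.map (SimpleGraph.Embedding.induce Tᶜ).toHom).support := by
        rw [← hqmap]
        erw [Walk.support_map]
        exact List.mem_map_of_mem hz
      have h2 : (z : V) ∈ Tᶜ := by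
        rw [Walk.support_map] at h1
        obtain ⟨a, -, ha⟩ := List.mem_map.mp h1
        rw [← ha]
        exact a.prop
      exact h2 ⟨z, hzS, rfl⟩
    refine ⟨_, liftWalk _ q hsupp2, ?_, ?_⟩
    · rw [← Walk.map_isCycle_iff_of_injective
        (f := (SimpleGraph.Embedding.induce Sᶜ).toHom) Subtype.val_injective]
      rw [liftWalk_map]
      exact hqc
    · conv_lhs => rw [← hqmap]
      conv_lhs => rw [← liftWalk_map Sᶜ q hsupp2]
      erw [Walk.edges_map, Walk.edges_map, List.map_map]
      rfl
  obtain ⟨y, r, hr, her⟩ := key c hc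
  obtain ⟨y', r', hr', her'⟩ := key c' hc'
  have iffr := fun d => hsub r r' hr hr' d
  have h1 : ∀ {x : ↥Tᶜ} (p : (G.induce Tᶜ).Walk x x), e₀ ∈ p.edges ↔
      Sym2.map Subtype.val e₀ ∈ (p.map (SimpleGraph.Embedding.induce Tᶜ).toHom).edges := by
    intro x p
    rw [Walk.edges_map]
    exact (List.mem_map_of_injective (Sym2.map.injective Subtype.val_injective)).symm
  rw [h1 c, h1 c', her, her']
  simp only [List.mem_map]
  constructor
  · rintro ⟨d, hd, hde⟩; exact ⟨d, (iffr d).mp hd, hde⟩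
  · rintro ⟨d, hd, hde⟩; exact ⟨d, (iffr d).mpr hd, hde⟩

end ObstructionAux

/-- every vertex and every edge of a minor-obstruction for
`k`-apex sub-unicyclic graphs lies on a cycle. -/
theorem obstruction_vertices_edges_on_cycles {V : Type} [Finite V] (k : ℕ)
    (G : SimpleGraph V) (h : ObstructionSub k G) :
    (∀ v : V, ∃ (u : V) (c : G.Walk u u), c.IsCycle ∧ v ∈ c.support) ∧
    (∀ e ∈ G.edgeSet, ∃ (u : V) (c : G.Walk u u), c.IsCycle ∧ e ∈ c.edges) := by
  constructor
  · intro v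
    by_contra hcon
    push_neg at hcon
    exact claim_vertex k G h v hcon
  · intro e he
    by_contra hcon
    push_neg at hcon
    exact claim_edge k G h he hcon
end

section
/- If G is a connected graph containing some graph from obs(S) = {2K_3, K_4^-, Z} as a minor, then G contains K_4^- or the butterfly graph Z as a minor. -/
open SimpleGraph

section ObsHelpers

/-- Reachability in induced subgraph is monotone in the set. -/
private lemma reach_mono' {V : Type} {G : SimpleGraph V} {s t : Set V} (hst : s ⊆ t)
    {a b : V} (ha : a ∈ s) (hb : b ∈ s)
    (hr : (G.induce s).Reachable ⟨a, ha⟩ ⟨b, hb⟩) :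
    (G.induce t).Reachable ⟨a, hst ha⟩ ⟨b, hst hb⟩ := by
  let F : G.induce s →g G.induce t :=
    ⟨fun x => ⟨x.1, hst x.2⟩, fun h => h⟩
  exact hr.map F

/-- A walk staying inside `C` gives reachability in `G.induce C` from start to any support vtx. -/
private lemma walk_reach' {V : Type} {G : SimpleGraph V} {C : Set V} :
    ∀ {x y : V} (p : G.Walk x y) (hp : ∀ z ∈ p.support, z ∈ C)
      (z : V) (hz : z ∈ p.support),
      (G.induce C).Reachable ⟨x, hp x p.start_mem_support⟩ ⟨z, hp z hz⟩ := by
  intro x y p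
  induction p with
  | nil =>
    intro hp z hz
    simp only [SimpleGraph.Walk.support_nil, List.mem_singleton] at hz
    subst hz; rfl
  | @cons a c y hadj p ih =>
    intro hp z hz
    have hc : c ∈ C := hp c (by simp)
    have hstep : (G.induce C).Reachable ⟨a, hp a (by simp)⟩ ⟨c, hc⟩ :=
      SimpleGraph.Adj.reachable (by exact hadj)
    simp only [SimpleGraph.Walk.support_cons, List.mem_cons] at hz
    rcases hz with rfl | hz
    · rfl
    · exact hstep.trans (ih (fun w hw => hp w (by simp [hw])) z hz)

/-- Walk trimming: from a walk between `A` and `B`, get one touching `A ∪ B` only at ends. -/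
private lemma trim_walk {V : Type} {G : SimpleGraph V} (A B : Set V) :
    ∀ (n : ℕ) {a b : V} (p : G.Walk a b), p.length = n → a ∈ A → b ∈ B →
      ∃ (u v : V) (q : G.Walk u v), u ∈ A ∧ v ∈ B ∧
        ∀ x ∈ q.support, x = u ∨ x = v ∨ (x ∉ A ∧ x ∉ B) := by
  classical
  intro n
  induction n using Nat.strong_induction_on with
  | _ n ih =>
    intro a b p hlen ha hb
    by_cases hbad : ∃ x ∈ p.support, x ≠ a ∧ x ≠ b ∧ (x ∈ A ∨ x ∈ B)
    · obtain ⟨x, hxs, hxa, hxb, hxAB⟩ := hbad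
      rcases hxAB with hxA | hxB
      · have hspec := SimpleGraph.Walk.take_spec p hxs
        have hlt : (p.dropUntil x hxs).length < n := by
          have := congrArg SimpleGraph.Walk.length hspec
          rw [SimpleGraph.Walk.length_append] at this
          have hpos : (p.takeUntil x hxs).length ≠ 0 := by
            intro h0
            exact hxa (SimpleGraph.Walk.eq_of_length_eq_zero h0).symm
          omega
        exact ih _ hlt (p.dropUntil x hxs) rfl hxA hb
      · have hspec := SimpleGraph.Walk.take_spec p hxs
        have hlt : (p.takeUntil x hxs).length < n := by
          have := congrArg SimpleGraph.Walk.length hspec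
          rw [SimpleGraph.Walk.length_append] at this
          have hpos : (p.dropUntil x hxs).length ≠ 0 := by
            intro h0
            exact hxb (SimpleGraph.Walk.eq_of_length_eq_zero h0)
          omega
        exact ih _ hlt (p.takeUntil x hxs) rfl ha hxB
    · push_neg at hbad
      exact ⟨a, b, p, ha, hb, fun x hx => by
        by_cases h1 : x = a
        · exact Or.inl h1
        by_cases h2 : x = b
        · exact Or.inr (Or.inl h2)
        · have := hbad x hx h1 h2
          exact Or.inr (Or.inr this)⟩

/-- The quotient map from `2K₃` branch labels to butterfly branch labels. -/
private def σf : Fin 6 → Option (Fin 5) := ![some 2, some 0, some 1, some 2, some 3, some 4]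

private lemma swap_adj2 (i j : Fin 6) (hi : i.val < 3) (hj : 3 ≤ j.val) (a b : Fin 6)
    (h : twoK3.Adj a b) :
    twoK3.Adj (Equiv.swap 0 i (Equiv.swap 3 j a)) (Equiv.swap 0 i (Equiv.swap 3 j b)) := by
  simp only [twoK3, SimpleGraph.fromRel_adj] at *
  revert hi hj h
  revert i j a b
  decide

end ObsHelpers

/-- a connected graph containing some graph of
`obs(S) = {2K₃, K₄⁻, Z}` as a minor contains `K₄⁻` or the butterfly as a minor. -/
theorem connected_obs_minor {V : Type} [Finite V] (G : SimpleGraph V)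
    (hc : G.Connected)
    (h : IsMinor twoK3 G ∨ IsMinor K4minus G ∨ IsMinor butterfly G) :
    IsMinor K4minus G ∨ IsMinor butterfly G := by
  rcases h with h2 | h4 | hb
  swap
  · exact Or.inl h4
  swap
  · exact Or.inr hb
  right
  classical
  obtain ⟨f, hconn, hadjf⟩ := h2
  have hne : ∀ w : Fin 6, ∃ x, f x = some w := by
    intro w
    obtain ⟨⟨x, hx⟩⟩ := (hconn w).nonempty
    exact ⟨x, hx⟩
  obtain ⟨a0, ha0⟩ := hne 0
  obtain ⟨b0, hb0⟩ := hne 3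
  set A : Set V := {x | ∃ i : Fin 6, i.val < 3 ∧ f x = some i} with hA
  set B : Set V := {x | ∃ i : Fin 6, 3 ≤ i.val ∧ f x = some i} with hB
  have haA : a0 ∈ A := ⟨0, by decide, ha0⟩
  have hbB : b0 ∈ B := ⟨3, by decide, hb0⟩
  obtain ⟨p⟩ := hc.preconnected a0 b0
  obtain ⟨u, v, q, huA, hvB, hq⟩ := trim_walk A B p.length p rfl haA hbB
  obtain ⟨i, hi, hfu⟩ := huA
  obtain ⟨j, hj, hfv⟩ := hvB
  set π : Fin 6 ≃ Fin 6 := (Equiv.swap 0 i).trans (Equiv.swap 3 j) with hπ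
  have hπi : π i = 0 := by
    have h1 : Equiv.swap (0 : Fin 6) i i = 0 := Equiv.swap_apply_right 0 i
    have h2 : Equiv.swap (3 : Fin 6) j 0 = 0 := by
      apply Equiv.swap_apply_of_ne_of_ne
      · decide
      · intro h0; rw [← h0] at hj; simp at hj
    simp [hπ, Equiv.trans_apply, h1, h2]
  have hπj : π j = 3 := by
    have h1 : Equiv.swap (0 : Fin 6) i j = j := by
      apply Equiv.swap_apply_of_ne_of_ne
      · intro h0; rw [h0] at hj; simp at hj
      · intro h0; rw [h0] at hj; omega
    have h2 : Equiv.swap (3 : Fin 6) j j = 3 := Equiv.swap_apply_right 3 j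
    simp [hπ, Equiv.trans_apply, h1, h2]
  set f1 : V → Option (Fin 6) := fun x => (f x).map π with hf1
  have hf1u : f1 u = some 0 := by simp [hf1, hfu, hπi]
  have hf1v : f1 v = some 3 := by simp [hf1, hfv, hπj]
  have hset : ∀ w : Fin 6, {x | f1 x = some w} = {x | f x = some (π.symm w)} := by
    intro w
    ext x
    simp only [hf1, Set.mem_setOf_eq, Option.map_eq_some_iff]
    constructor
    · rintro ⟨a, hfa, rfl⟩
      rw [Equiv.symm_apply_apply]; exact hfa
    · intro hfa
      exact ⟨π.symm w, hfa, Equiv.apply_symm_apply π w⟩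
  have hconn1 : ∀ w : Fin 6, (G.induce {x | f1 x = some w}).Connected := by
    intro w; rw [hset w]; exact hconn _
  have hadj1 : ∀ w1 w2 : Fin 6, twoK3.Adj w1 w2 →
      ∃ v1 v2 : V, f1 v1 = some w1 ∧ f1 v2 = some w2 ∧ G.Adj v1 v2 := by
    intro w1 w2 hw
    have hadj2 : twoK3.Adj (π.symm w1) (π.symm w2) := by
      have := swap_adj2 i j hi hj w1 w2 hw
      simpa [hπ, Equiv.symm_trans_apply] using this
    obtain ⟨v1, v2, hv1, hv2, hvadj⟩ := hadjf _ _ hadj2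
    refine ⟨v1, v2, ?_, ?_, hvadj⟩
    · simp [hf1, hv1, Equiv.apply_symm_apply]
    · simp [hf1, hv2, Equiv.apply_symm_apply]
  have hq1 : ∀ x ∈ q.support, f1 x = some 0 ∨ f1 x = some 3 ∨ f1 x = none := by
    intro x hx
    rcases hq x hx with rfl | rfl | ⟨hxA, hxB⟩
    · exact Or.inl hf1u
    · exact Or.inr (Or.inl hf1v)
    · right; right
      cases hfx : f x with
      | none => simp [hf1, hfx]
      | some k =>
        exfalso
        by_cases hk : k.val < 3
        · exact hxA ⟨k, hk, hfx⟩
        · exact hxB ⟨k, by omega, hfx⟩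
  set C : Set V := {x | f1 x = some 0 ∨ f1 x = some 3 ∨ (f1 x = none ∧ x ∈ q.support)}
    with hC
  set g : V → Option (Fin 5) :=
    fun x => (f1 x).elim (if x ∈ q.support then some 2 else none) σf with hg
  have hgsome : ∀ (x : V) (k : Fin 6), f1 x = some k → g x = σf k := by
    intro x k hx; simp [hg, hx]
  have hgnone : ∀ x : V, f1 x = none → g x = (if x ∈ q.support then some 2 else none) := by
    intro x hx; simp [hg, hx]
  -- branch sets of g for the four non-center vertices
  have hbranch : ∀ (w : Fin 5) (k : Fin 6), w ≠ 2 → (∀ m : Fin 6, σf m = some w ↔ m = k) →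
      {x | g x = some w} = {x | f1 x = some k} := by
    intro w k hw2 hσ
    ext x
    simp only [Set.mem_setOf_eq]
    cases hfx : f1 x with
    | none =>
      rw [hgnone x hfx]
      constructor
      · intro hgx
        exfalso
        by_cases hxs : x ∈ q.support
        · rw [if_pos hxs] at hgx
          exact hw2 (by injection hgx with h; exact h.symm)
        · rw [if_neg hxs] at hgx; exact nomatch hgx
      · intro hx; exact nomatch hx
    | some m =>
      rw [hgsome x m hfx]
      rw [hσ m]
      constructor
      · rintro rfl; rfl
      · intro hx
        exact Option.some.inj hx
  have hgC : {x | g x = some 2} = C := by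
    ext x
    simp only [hC, Set.mem_setOf_eq]
    cases hfx : f1 x with
    | none =>
      rw [hgnone x hfx]
      by_cases hxs : x ∈ q.support
      · simp [hxs]
      · simp [hxs]
    | some m =>
      have hσ2 : ∀ n : Fin 6, σf n = some 2 ↔ n = 0 ∨ n = 3 := by decide
      rw [hgsome x m hfx, hσ2 m]
      constructor
      · rintro (rfl | rfl)
        · exact Or.inl rfl
        · exact Or.inr (Or.inl rfl)
      · rintro (h0 | h3 | ⟨hn, _⟩)
        · exact Or.inl (Option.some.inj h0)
        · exact Or.inr (Option.some.inj h3)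
        · exact nomatch hn
  -- the center branch set is connected
  have huC : u ∈ C := Or.inl hf1u
  have hvC : v ∈ C := Or.inr (Or.inl hf1v)
  have hqC : ∀ z ∈ q.support, z ∈ C := by
    intro z hz
    rcases hq1 z hz with h0 | h3 | hn
    · exact Or.inl h0
    · exact Or.inr (Or.inl h3)
    · exact Or.inr (Or.inr ⟨hn, hz⟩)
  have hs0 : {x | f1 x = some 0} ⊆ C := fun x hx => Or.inl hx
  have hs3 : {x | f1 x = some 3} ⊆ C := fun x hx => Or.inr (Or.inl hx)
  have huv : (G.induce C).Reachable ⟨u, huC⟩ ⟨v, hvC⟩ :=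
    walk_reach' q hqC v q.end_mem_support
  have key : ∀ (c : V) (hcC : c ∈ C), (G.induce C).Reachable ⟨c, hcC⟩ ⟨u, huC⟩ := by
    intro c hcC
    rcases hcC with hc0 | hc3 | ⟨hcn, hcs⟩
    · have hr := ((hconn1 0).preconnected ⟨c, hc0⟩ ⟨u, hf1u⟩)
      exact reach_mono' hs0 hc0 hf1u hr
    · have hr := ((hconn1 3).preconnected ⟨c, hc3⟩ ⟨v, hf1v⟩)
      exact (reach_mono' hs3 hc3 hf1v hr).trans huv.symm
    · exact (walk_reach' q hqC c hcs).symm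
  have hCconn : (G.induce C).Connected := by
    rw [SimpleGraph.connected_iff]
    refine ⟨fun c d => ?_, ⟨⟨u, huC⟩⟩⟩
    exact (key c.1 c.2).trans (key d.1 d.2).symm
  -- adjacency helper
  have hedge : ∀ (i1 i2 : Fin 6) (w1 w2 : Fin 5), twoK3.Adj i1 i2 →
      σf i1 = some w1 → σf i2 = some w2 →
      ∃ v1 v2 : V, g v1 = some w1 ∧ g v2 = some w2 ∧ G.Adj v1 v2 := by
    intro i1 i2 w1 w2 ht h1 h2
    obtain ⟨v1, v2, hv1, hv2, hvadj⟩ := hadj1 i1 i2 ht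
    exact ⟨v1, v2, by rw [hgsome v1 i1 hv1, h1], by rw [hgsome v2 i2 hv2, h2], hvadj⟩
  refine ⟨g, ?_, ?_⟩
  · intro w
    fin_cases w
    · exact (hbranch 0 1 (by decide) (by decide)).symm ▸ hconn1 1
    · exact (hbranch 1 2 (by decide) (by decide)).symm ▸ hconn1 2
    · exact hgC.symm ▸ hCconn
    · exact (hbranch 3 4 (by decide) (by decide)).symm ▸ hconn1 4
    · exact (hbranch 4 5 (by decide) (by decide)).symm ▸ hconn1 5
  · intro w1 w2 hw
    have htk : ∀ a b : Fin 6, a ≠ b ∧ (a.val / 3 = b.val / 3 ∨ b.val / 3 = a.val / 3) →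
        twoK3.Adj a b := by
      intro a b hab
      rw [twoK3, SimpleGraph.fromRel_adj]
      exact hab
    fin_cases w1 <;> fin_cases w2 <;>
      first
        | (exfalso; simp only [butterfly, SimpleGraph.fromRel_adj] at hw; revert hw; decide)
        | exact hedge 1 2 _ _ (htk 1 2 (by decide)) (by decide) (by decide)
        | exact hedge 2 1 _ _ (htk 2 1 (by decide)) (by decide) (by decide)
        | exact hedge 1 0 _ _ (htk 1 0 (by decide)) (by decide) (by decide)
        | exact hedge 0 1 _ _ (htk 0 1 (by decide)) (by decide) (by decide)
        | exact hedge 2 0 _ _ (htk 2 0 (by decide)) (by decide) (by decide)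
        | exact hedge 0 2 _ _ (htk 0 2 (by decide)) (by decide) (by decide)
        | exact hedge 3 4 _ _ (htk 3 4 (by decide)) (by decide) (by decide)
        | exact hedge 4 3 _ _ (htk 4 3 (by decide)) (by decide) (by decide)
        | exact hedge 3 5 _ _ (htk 3 5 (by decide)) (by decide) (by decide)
        | exact hedge 5 3 _ _ (htk 5 3 (by decide)) (by decide) (by decide)
        | exact hedge 4 5 _ _ (htk 4 5 (by decide)) (by decide) (by decide)
        | exact hedge 5 4 _ _ (htk 5 4 (by decide)) (by decide) (by decide)
end

section
/- The minor-obstruction set of the class of sub-unicyclic graphs is exactly {2K_3, K_4^-, Z}: a graph contains more than one cycle if and only if it contains one of 2K_3, K_4^-, Z as a minor. -/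
open SimpleGraph

variable {V : Type} {G : SimpleGraph V}

/-- `X` and `Y` are joined by an edge of `G`. -/
def EdgeBtw (G : SimpleGraph V) (X Y : Set V) : Prop := ∃ a ∈ X, ∃ b ∈ Y, G.Adj a b

lemma EdgeBtw.symm {X Y : Set V} (h : EdgeBtw G X Y) : EdgeBtw G Y X := by
  obtain ⟨a, ha, b, hb, hab⟩ := h
  exact ⟨b, hb, a, ha, hab.symm⟩

/-- `X` and `Y` are disjoint. -/
def DisjSets (X Y : Set V) : Prop := ∀ v, v ∈ X → v ∈ Y → False

lemma reach_induce {s : Set V} :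
    ∀ {a b : V} (p : G.Walk a b) (hp : ∀ v ∈ p.support, v ∈ s),
      (G.induce s).Reachable ⟨a, hp a p.start_mem_support⟩ ⟨b, hp b p.end_mem_support⟩ := by
  intro a b p
  induction p with
  | nil => intro hp; rfl
  | @cons a m b h q ih =>
    intro hp
    have hq : ∀ v ∈ q.support, v ∈ s := fun v hv => hp v (by simp [hv])
    refine Reachable.trans ?_ (ih hq)
    exact Adj.reachable (by simpa using h)

lemma connected_induce_support {a b : V} (p : G.Walk a b) :
    (G.induce {v | v ∈ p.support}).Connected := by
  classical
  rw [connected_iff]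
  refine ⟨?_, ⟨⟨a, p.start_mem_support⟩⟩⟩
  have key : ∀ z : {v | v ∈ p.support},
      (G.induce {v | v ∈ p.support}).Reachable ⟨a, p.start_mem_support⟩ z := by
    rintro ⟨z, hz⟩
    have h1 : ∀ v ∈ (p.takeUntil z hz).support, v ∈ {v | v ∈ p.support} :=
      fun v hv => p.support_takeUntil_subset hz hv
    exact reach_induce (p.takeUntil z hz) h1
  intro u v
  exact (key u).symm.trans (key v)

lemma connected_induce_singleton (x : V) : (G.induce {x}).Connected := by
  rw [connected_iff]
  constructor
  · rintro ⟨u, hu⟩ ⟨v, hv⟩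
    simp only [Set.mem_singleton_iff] at hu hv
    subst hu; subst hv; rfl
  · exact ⟨⟨x, rfl⟩⟩

lemma isMinor_of_branchSets {W : Type} (H : SimpleGraph W) (B : W → Set V)
    (hdisj : ∀ w1 w2, w1 ≠ w2 → ∀ v, v ∈ B w1 → v ∈ B w2 → False)
    (hconn : ∀ w, (G.induce (B w)).Connected)
    (hadj : ∀ w1 w2, H.Adj w1 w2 → ∃ v1 ∈ B w1, ∃ v2 ∈ B w2, G.Adj v1 v2) :
    IsMinor H G := by
  classical
  refine ⟨fun v => if h : ∃ w, v ∈ B w then some (Classical.choose h) else none, ?_, ?_⟩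
  · intro w
    have key : {v | (if h : ∃ w, v ∈ B w then some (Classical.choose h) else none) = some w}
        = B w := by
      ext v
      simp only [Set.mem_setOf_eq]
      constructor
      · intro hv
        split at hv
        · rename_i h
          have := Classical.choose_spec h
          rw [Option.some_inj] at hv
          rwa [hv] at this
        · simp at hv
      · intro hv
        have h : ∃ w, v ∈ B w := ⟨w, hv⟩
        rw [dif_pos h, Option.some_inj]
        by_contra hne
        exact hdisj _ _ hne v (Classical.choose_spec h) hv
    rw [key]
    exact hconn w
  · intro w1 w2 hw
    obtain ⟨v1, hv1, v2, hv2, hadj'⟩ := hadj w1 w2 hw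
    refine ⟨v1, v2, ?_, ?_, hadj'⟩
    · have h : ∃ w, v1 ∈ B w := ⟨w1, hv1⟩
      simp only [dif_pos h, Option.some_inj]
      by_contra hne
      exact hdisj _ _ hne v1 (Classical.choose_spec h) hv1
    · have h : ∃ w, v2 ∈ B w := ⟨w2, hv2⟩
      simp only [dif_pos h, Option.some_inj]
      by_contra hne
      exact hdisj _ _ hne v2 (Classical.choose_spec h) hv2

lemma two_le_length_of_mem {a b v : V} (P : G.Walk a b) (hv : v ∈ P.support)
    (h1 : v ≠ a) (h2 : v ≠ b) : 2 ≤ P.length := by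
  cases P with
  | nil => simp only [Walk.support_nil, List.mem_singleton] at hv; exact absurd hv h1
  | cons h q =>
    cases q with
    | nil =>
      simp only [Walk.support_cons, Walk.support_nil, List.mem_cons, List.mem_singleton,
        List.not_mem_nil, or_false] at hv
      rcases hv with rfl | rfl
      · exact absurd rfl h1
      · exact absurd rfl h2
    | cons h' q' => simp only [Walk.length_cons]; omega

lemma adj_of_length_one {a b : V} (P : G.Walk a b) (h : P.length = 1) : G.Adj a b := by
  cases P with
  | nil => simp at h
  | cons had q =>
    cases q with
    | nil => exact had
    | cons h' q' => simp only [Walk.length_cons] at h; omega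

lemma length_zero_of_path_loop {a : V} {P : G.Walk a a} (hP : P.IsPath) : P.length = 0 := by
  have h : (⟨P, hP⟩ : G.Path a a) = Path.nil := Path.loop_eq _
  have h2 := congrArg (fun p : G.Path a a => (p : G.Walk a a).length) h
  simpa using h2

lemma ne_of_path_pos {a b : V} {P : G.Walk a b} (hP : P.IsPath) (h : 0 < P.length) : a ≠ b := by
  rintro rfl
  rw [length_zero_of_path_loop hP] at h
  exact absurd h (by omega)

/-- Interior of a path of length ≥ 2 as a connected set. -/
lemma exists_interior {m n : V} (P : G.Walk m n) (hP : P.IsPath) (h2 : 2 ≤ P.length) :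
    ∃ (w1 w2 : V) (I : Set V), (G.induce I).Connected ∧ w1 ∈ I ∧ w2 ∈ I ∧
      G.Adj m w1 ∧ G.Adj w2 n ∧ m ∉ I ∧ n ∉ I ∧ ∀ v ∈ I, v ∈ P.support := by
  have hmn : m ≠ n := ne_of_path_pos hP (by omega)
  obtain ⟨w1, h1, Q, rfl⟩ := Walk.exists_eq_cons_of_ne hmn P
  have hQ : Q.IsPath := hP.of_cons
  have hmQ : m ∉ Q.support := ((Walk.cons_isPath_iff _ _).mp hP).2
  have hw1n : w1 ≠ n := by
    rintro rfl
    have hq0 : Q.length = 0 := length_zero_of_path_loop hQ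
    simp [Walk.length_cons, hq0] at h2
  have hnw1 : n ≠ w1 := hw1n.symm
  obtain ⟨w2, h2', R, hR⟩ := Walk.exists_eq_cons_of_ne hnw1 Q.reverse
  have hQrev : Q.reverse.IsPath := hQ.reverse
  rw [hR] at hQrev
  have hRpath : R.IsPath := hQrev.of_cons
  have hnR : n ∉ R.support := ((Walk.cons_isPath_iff _ _).mp hQrev).2
  refine ⟨w1, w2, {v | v ∈ R.support}, connected_induce_support R, ?_, ?_, h1, h2'.symm, ?_, ?_, ?_⟩
  · exact R.end_mem_support
  · exact R.start_mem_support
  · intro hm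
    have : m ∈ Q.support := by
      have : m ∈ Q.reverse.support := by rw [hR, Walk.support_cons]; exact List.mem_cons_of_mem _ hm
      rwa [Walk.support_reverse, List.mem_reverse] at this
    exact hmQ this
  · exact hnR
  · intro v hv
    have : v ∈ Q.reverse.support := by rw [hR, Walk.support_cons]; exact List.mem_cons_of_mem _ hv
    rw [Walk.support_reverse, List.mem_reverse] at this
    rw [Walk.support_cons]
    exact List.mem_cons_of_mem _ this

/-- From connectivity of an induced subgraph, get a path in `G` within the set. -/
lemma path_within {s : Set V} (hs : (G.induce s).Connected) {a b : V} (ha : a ∈ s) (hb : b ∈ s) :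
    ∃ p : G.Walk a b, p.IsPath ∧ ∀ v ∈ p.support, v ∈ s := by
  obtain ⟨q⟩ := hs.preconnected ⟨a, ha⟩ ⟨b, hb⟩
  classical
  let q' := q.toPath
  refine ⟨((q' : (G.induce s).Walk ⟨a, ha⟩ ⟨b, hb⟩).map
      (Embedding.induce s).toHom).copy rfl rfl, ?_, ?_⟩
  · exact (Walk.isPath_copy _ _ _).2 (Walk.map_isPath_of_injective (Subtype.val_injective) q'.2)
  · intro v hv
    erw [Walk.support_copy, Walk.support_map, List.mem_map] at hv
    obtain ⟨⟨v', hv'⟩, _, rfl⟩ := hv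
    exact hv'

lemma cycle_of_triangle (A B C : Set V)
    (hAB : ∀ v, v ∈ A → v ∈ B → False) (hAC : ∀ v, v ∈ A → v ∈ C → False)
    (hBC : ∀ v, v ∈ B → v ∈ C → False)
    (hA : (G.induce A).Connected) (hB : (G.induce B).Connected) (hC : (G.induce C).Connected)
    {a b b' c c' a' : V} (ha : a ∈ A) (hb : b ∈ B) (hab : G.Adj a b)
    (hb' : b' ∈ B) (hc : c ∈ C) (hb'c : G.Adj b' c)
    (hc' : c' ∈ C) (ha' : a' ∈ A) (hc'a' : G.Adj c' a') :
    ∃ (w : G.Walk a a), w.IsCycle ∧ (∀ v ∈ w.support, v ∈ A ∨ v ∈ B ∨ v ∈ C) ∧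
      s(a, b) ∈ w.edges := by
  obtain ⟨pB, hpB, hpBs⟩ := path_within hB hb hb'
  obtain ⟨pC, hpC, hpCs⟩ := path_within hC hc hc'
  obtain ⟨pA, hpA, hpAs⟩ := path_within hA ha' ha
  set P : G.Walk b a := pB.append (Walk.cons hb'c (pC.append (Walk.cons hc'a' pA))) with hP
  have hsupP : P.support = pB.support ++ (pC.support ++ pA.support) := by
    rw [hP]
    rw [Walk.support_append, Walk.support_cons, List.tail_cons, Walk.support_append,
      Walk.support_cons, List.tail_cons]
  have hPpath : P.IsPath := by
    apply Walk.IsPath.mk'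
    rw [hsupP]
    rw [List.nodup_append]
    refine ⟨hpB.support_nodup, ?_, ?_⟩
    · rw [List.nodup_append]
      refine ⟨hpC.support_nodup, hpA.support_nodup, ?_⟩
      intro v hv1 _ hv2 rfl
      exact hAC v (hpAs v hv2) (hpCs v hv1)
    · intro v hv1 _ hv2 rfl
      rw [List.mem_append] at hv2
      rcases hv2 with hv2 | hv2
      · exact hBC v (hpBs v hv1) (hpCs v hv2)
      · exact hAB v (hpAs v hv2) (hpBs v hv1)
  have hedgesP : P.edges = pB.edges ++ (s(b', c) :: (pC.edges ++ s(c', a') :: pA.edges)) := by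
    rw [hP, Walk.edges_append, Walk.edges_cons, Walk.edges_append, Walk.edges_cons]
  have henotin : s(a, b) ∉ P.edges := by
    rw [hedgesP]
    intro hmem
    rw [List.mem_append] at hmem
    rcases hmem with hmem | hmem
    · exact hAB a ha (hpBs a (pB.fst_mem_support_of_mem_edges hmem))
    · rw [List.mem_cons] at hmem
      rcases hmem with hmem | hmem
      · rw [Sym2.eq_iff] at hmem
        rcases hmem with ⟨rfl, rfl⟩ | ⟨rfl, rfl⟩
        · exact hAB a ha hb'
        · exact hAC a ha hc
      · rw [List.mem_append] at hmem
        rcases hmem with hmem | hmem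
        · exact hAC a ha (hpCs a (pC.fst_mem_support_of_mem_edges hmem))
        · rw [List.mem_cons] at hmem
          rcases hmem with hmem | hmem
          · rw [Sym2.eq_iff] at hmem
            rcases hmem with ⟨rfl, rfl⟩ | ⟨rfl, rfl⟩
            · exact hAC a ha hc'
            · exact hBC b hb hc'
          · exact hAB b (hpAs b (pA.snd_mem_support_of_mem_edges hmem)) hb
  refine ⟨Walk.cons hab P, ?_, ?_, ?_⟩
  · rw [Walk.cons_isCycle_iff]
    exact ⟨hPpath, henotin⟩
  · intro v hv
    rw [Walk.support_cons, List.mem_cons] at hv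
    rcases hv with rfl | hv
    · exact Or.inl ha
    · rw [hsupP, List.mem_append, List.mem_append] at hv
      rcases hv with hv | hv | hv
      · exact Or.inr (Or.inl (hpBs v hv))
      · exact Or.inr (Or.inr (hpCs v hv))
      · exact Or.inl (hpAs v hv)
  · rw [Walk.edges_cons]
    exact List.mem_cons_self

/-- Two vertex-disjoint "triangle structures" give two cycles with different edge sets. -/
lemma notSubUnicyclic_of_triangles (A B C A' B' C' : Set V)
    (hAB : ∀ v, v ∈ A → v ∈ B → False) (hAC : ∀ v, v ∈ A → v ∈ C → False)
    (hBC : ∀ v, v ∈ B → v ∈ C → False)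
    (hA'B' : ∀ v, v ∈ A' → v ∈ B' → False) (hA'C' : ∀ v, v ∈ A' → v ∈ C' → False)
    (hB'C' : ∀ v, v ∈ B' → v ∈ C' → False)
    (hAA' : ∀ v, v ∈ A → v ∈ A' → False) (hAB' : ∀ v, v ∈ A → v ∈ B' → False)
    (hAC' : ∀ v, v ∈ A → v ∈ C' → False)
    (hA : (G.induce A).Connected) (hB : (G.induce B).Connected) (hC : (G.induce C).Connected)
    (hA' : (G.induce A').Connected) (hB' : (G.induce B').Connected)
    (hC' : (G.induce C').Connected)
    {a b b' c c' a' : V} (ha : a ∈ A) (hb : b ∈ B) (hab : G.Adj a b)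
    (hb' : b' ∈ B) (hc : c ∈ C) (hb'c : G.Adj b' c)
    (hc' : c' ∈ C) (ha' : a' ∈ A) (hc'a' : G.Adj c' a')
    {a2 b2 b2' c2 c2' a2' : V} (ha2 : a2 ∈ A') (hb2 : b2 ∈ B') (hab2 : G.Adj a2 b2)
    (hb2' : b2' ∈ B') (hc2 : c2 ∈ C') (hb'c2 : G.Adj b2' c2)
    (hc2' : c2' ∈ C') (ha2' : a2' ∈ A') (hc'a2' : G.Adj c2' a2') :
    ¬ SubUnicyclic G := by
  obtain ⟨w1, hw1, hw1s, hw1e⟩ := cycle_of_triangle A B C hAB hAC hBC hA hB hC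
    ha hb hab hb' hc hb'c hc' ha' hc'a'
  obtain ⟨w2, hw2, hw2s, _⟩ := cycle_of_triangle A' B' C' hA'B' hA'C' hB'C' hA' hB' hC'
    ha2 hb2 hab2 hb2' hc2 hb'c2 hc2' ha2' hc'a2'
  intro hsub
  have := (hsub w1 w2 hw1 hw2 s(a, b)).mp hw1e
  have hamem : a ∈ w2.support := w2.fst_mem_support_of_mem_edges this
  rcases hw2s a hamem with h | h | h
  · exact hAA' a ha h
  · exact hAB' a ha h
  · exact hAC' a ha h

lemma notSub_of_minor_gadget {W : Type} {H : SimpleGraph W} (hm : IsMinor H G)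
    (i0 i1 i2 j0 j1 j2 : W)
    (h01 : i0 ≠ i1) (h02 : i0 ≠ i2) (h12 : i1 ≠ i2)
    (g01 : j0 ≠ j1) (g02 : j0 ≠ j2) (g12 : j1 ≠ j2)
    (k0 : i0 ≠ j0) (k1 : i0 ≠ j1) (k2 : i0 ≠ j2)
    (e01 : H.Adj i0 i1) (e12 : H.Adj i1 i2) (e20 : H.Adj i2 i0)
    (f01 : H.Adj j0 j1) (f12 : H.Adj j1 j2) (f20 : H.Adj j2 j0) :
    ¬ SubUnicyclic G := by
  obtain ⟨f, hconn, hadj⟩ := hm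
  have disj : ∀ w1 w2 : W, w1 ≠ w2 → ∀ v, v ∈ {v | f v = some w1} →
      v ∈ {v | f v = some w2} → False := by
    intro w1 w2 hne v h1 h2
    rw [Set.mem_setOf_eq] at h1 h2
    rw [h1] at h2
    exact hne (Option.some_injective _ h2)
  obtain ⟨x1, x2, hx1, hx2, ex⟩ := hadj i0 i1 e01
  obtain ⟨y1, y2, hy1, hy2, ey⟩ := hadj i1 i2 e12
  obtain ⟨z1, z2, hz1, hz2, ez⟩ := hadj i2 i0 e20
  obtain ⟨x1', x2', hx1', hx2', ex'⟩ := hadj j0 j1 f01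
  obtain ⟨y1', y2', hy1', hy2', ey'⟩ := hadj j1 j2 f12
  obtain ⟨z1', z2', hz1', hz2', ez'⟩ := hadj j2 j0 f20
  exact notSubUnicyclic_of_triangles
    {v | f v = some i0} {v | f v = some i1} {v | f v = some i2}
    {v | f v = some j0} {v | f v = some j1} {v | f v = some j2}
    (disj _ _ h01) (disj _ _ h02) (disj _ _ h12)
    (disj _ _ g01) (disj _ _ g02) (disj _ _ g12)
    (disj _ _ k0) (disj _ _ k1) (disj _ _ k2)
    (hconn _) (hconn _) (hconn _) (hconn _) (hconn _) (hconn _)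
    hx1 hx2 ex hy1 hy2 ey hz1 hz2 ez
    hx1' hx2' ex' hy1' hy2' ey' hz1' hz2' ez'

lemma mpr_main (h : IsMinor twoK3 G ∨ IsMinor K4minus G ∨ IsMinor butterfly G) :
    ¬ SubUnicyclic G := by
  rcases h with h | h | h
  · have adj : ∀ a b : Fin 6, a ≠ b → (a.val / 3 = b.val / 3) → twoK3.Adj a b := by
      intro a b h1 h2
      rw [twoK3, fromRel_adj]
      exact ⟨h1, Or.inl h2⟩
    exact notSub_of_minor_gadget h 0 1 2 3 4 5 (by decide) (by decide) (by decide)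
      (by decide) (by decide) (by decide) (by decide) (by decide) (by decide)
      (adj _ _ (by decide) (by decide)) (adj _ _ (by decide) (by decide))
      (adj _ _ (by decide) (by decide)) (adj _ _ (by decide) (by decide))
      (adj _ _ (by decide) (by decide)) (adj _ _ (by decide) (by decide))
  · have adj : ∀ a b : Fin 4, a ≠ b → s(a, b) ≠ s((0 : Fin 4), 1) → K4minus.Adj a b := by
      intro a b h1 h2
      rw [K4minus, deleteEdges_adj]
      exact ⟨h1, by simpa using h2⟩
    exact notSub_of_minor_gadget h 0 2 3 1 2 3 (by decide) (by decide) (by decide)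
      (by decide) (by decide) (by decide) (by decide) (by decide) (by decide)
      (adj _ _ (by decide) (by decide)) (adj _ _ (by decide) (by decide))
      (adj _ _ (by decide) (by decide)) (adj _ _ (by decide) (by decide))
      (adj _ _ (by decide) (by decide)) (adj _ _ (by decide) (by decide))
  · have adj : ∀ a b : Fin 5, a ≠ b →
        ((a.val ≤ 1 ∧ b.val ≤ 1) ∨ (3 ≤ a.val ∧ 3 ≤ b.val) ∨ a = 2 ∨ b = 2) →
        butterfly.Adj a b := by
      intro a b h1 h2
      rw [butterfly, fromRel_adj]
      exact ⟨h1, Or.inl h2⟩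
    exact notSub_of_minor_gadget h 0 1 2 3 4 2 (by decide) (by decide) (by decide)
      (by decide) (by decide) (by decide) (by decide) (by decide) (by decide)
      (adj _ _ (by decide) (by decide)) (adj _ _ (by decide) (by decide))
      (adj _ _ (by decide) (by decide)) (adj _ _ (by decide) (by decide))
      (adj _ _ (by decide) (by decide)) (adj _ _ (by decide) (by decide))

/-- Split a path into its first vertex and the (connected) rest. -/
lemma triangle_split {x m n : V} (P : G.Walk m n) (hP : P.IsPath) (hlen : 0 < P.length)
    (hx : x ∉ P.support) (h1 : G.Adj x m) (h2 : G.Adj n x) :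
    ∃ B : Set V, (G.induce B).Connected ∧ m ∉ B ∧ x ∉ B ∧
      (∃ b1 ∈ B, G.Adj m b1) ∧ (∃ b2 ∈ B, G.Adj x b2) ∧
      (∀ v, v ∈ P.support ↔ (v = m ∨ v ∈ B)) := by
  have hmn : m ≠ n := ne_of_path_pos hP hlen
  obtain ⟨w1, hw1, Q, rfl⟩ := Walk.exists_eq_cons_of_ne hmn P
  have hmQ : m ∉ Q.support := ((Walk.cons_isPath_iff _ _).mp hP).2
  refine ⟨{v | v ∈ Q.support}, connected_induce_support Q, hmQ, ?_, ?_, ?_, ?_⟩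
  · intro hxQ
    exact hx (by rw [Walk.support_cons]; exact List.mem_cons_of_mem _ hxQ)
  · exact ⟨w1, Q.start_mem_support, hw1⟩
  · exact ⟨n, Q.end_mem_support, h2.symm⟩
  · intro v
    rw [Walk.support_cons, List.mem_cons]
    rfl

/-- A cycle at `x` decomposes as `x` plus a path avoiding `x`. -/
lemma cycle_to_path {x : V} (d : G.Walk x x) (hd : d.IsCycle) :
    ∃ (m n : V) (P : G.Walk m n), P.IsPath ∧ 0 < P.length ∧ G.Adj x m ∧ G.Adj n x ∧
      x ∉ P.support ∧ (∀ v, v ∈ d.support ↔ (v = x ∨ v ∈ P.support)) := by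
  have hlen := hd.three_le_length
  cases d with
  | nil => simp at hlen
  | @cons _ v1 _ h1 q =>
    have hq : q.IsPath ∧ s(x, v1) ∉ q.edges := (Walk.cons_isCycle_iff q h1).mp hd
    have hxv1 : x ≠ v1 := h1.ne
    have hqrev : q.reverse.IsPath := hq.1.reverse
    obtain ⟨n', h2, R, hR⟩ := Walk.exists_eq_cons_of_ne hxv1 q.reverse
    have hconsR : (Walk.cons h2 R).IsPath := hR ▸ hqrev
    have hRpath : R.IsPath := hconsR.of_cons
    have hxR : x ∉ R.support := ((Walk.cons_isPath_iff _ _).mp hconsR).2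
    have hqsup : q.support = R.support.reverse ++ [x] := by
      have : q.reverse.support = x :: R.support := by rw [hR, Walk.support_cons]
      rw [Walk.support_reverse] at this
      have := congrArg List.reverse this
      simpa using this
    have hRlen : q.length = R.length + 1 := by
      have := congrArg Walk.length hR
      simpa [Walk.length_reverse, Walk.length_cons] using this
    refine ⟨v1, n', R.reverse, hRpath.reverse, ?_, h1, h2.symm, ?_, ?_⟩
    · rw [Walk.length_reverse]
      simp only [Walk.length_cons] at hlen
      omega
    · rw [Walk.support_reverse, List.mem_reverse]
      exact hxR
    · intro v
      rw [Walk.support_cons, List.mem_cons, hqsup, Walk.support_reverse, List.mem_append,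
        List.mem_singleton]
      constructor
      · rintro (rfl | hv | rfl)
        · exact Or.inl rfl
        · exact Or.inr hv
        · exact Or.inl rfl
      · rintro (rfl | hv)
        · exact Or.inl rfl
        · exact Or.inr (Or.inl hv)

/-- A cycle at `x` splits into `{x}` and two adjacent connected sets. -/
lemma cycle_split {x : V} (d : G.Walk x x) (hd : d.IsCycle) :
    ∃ A B : Set V, (G.induce A).Connected ∧ (G.induce B).Connected ∧
      (∀ v, v ∈ A → v ∈ B → False) ∧ x ∉ A ∧ x ∉ B ∧
      (∃ a ∈ A, G.Adj x a) ∧ (∃ b ∈ B, G.Adj x b) ∧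
      (∃ a ∈ A, ∃ b ∈ B, G.Adj a b) ∧
      (∀ v, v ∈ d.support ↔ (v = x ∨ v ∈ A ∨ v ∈ B)) := by
  obtain ⟨m, n, P, hP, hlen, h1, h2, hxP, hsup⟩ := cycle_to_path d hd
  obtain ⟨B, hB, hmB, hxB, ⟨b1, hb1, hmb1⟩, ⟨b2, hb2, hxb2⟩, hPB⟩ :=
    triangle_split P hP hlen hxP h1 h2
  refine ⟨{m}, B, ?_, hB, ?_, ?_, hxB, ⟨m, rfl, h1⟩, ⟨b2, hb2, hxb2⟩,
    ⟨m, rfl, b1, hb1, hmb1⟩, ?_⟩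
  · -- singleton connected
    rw [connected_iff]
    constructor
    · rintro ⟨u, hu⟩ ⟨v, hv⟩
      simp only [Set.mem_singleton_iff] at hu hv
      subst hu; subst hv; rfl
    · exact ⟨⟨m, rfl⟩⟩
  · rintro v rfl hvB
    exact hmB hvB
  · intro hxm
    rw [Set.mem_singleton_iff] at hxm
    subst hxm
    exact hxP P.start_mem_support
  · intro v
    rw [hsup v, hPB v]
    rfl

/-- Split a cycle at two of its vertices into two internally disjoint paths. -/
lemma cycle_split_two [DecidableEq V] {p q : V} (d : G.Walk p p) (hd : d.IsCycle)
    (hq : q ∈ d.support) (hpq : p ≠ q) :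
    ∃ (P1 : G.Walk p q) (P2 : G.Walk q p), P1.IsPath ∧ P2.IsPath ∧
      (∀ v, v ∈ d.support ↔ (v ∈ P1.support ∨ v ∈ P2.support)) ∧
      (∀ v, v ∈ P1.support → v ∈ P2.support → v = p ∨ v = q) ∧
      (∀ e ∈ P1.edges, e ∈ d.edges) ∧ (∀ e ∈ P2.edges, e ∈ d.edges) ∧
      (∀ e ∈ P1.edges, e ∉ P2.edges) ∧ d.length = P1.length + P2.length := by
  set P1 := d.takeUntil q hq with hP1
  set P2 := d.dropUntil q hq with hP2
  have hspec : P1.append P2 = d := d.take_spec hq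
  have hsupd : d.support = P1.support ++ P2.support.tail := by
    rw [← hspec, Walk.support_append]
  have h1 : P1.support = p :: P1.support.tail := P1.support_eq_cons
  have h2 : P2.support = q :: P2.support.tail := P2.support_eq_cons
  have htail : d.support.tail = P1.support.tail ++ P2.support.tail := by
    have : d.support = p :: (P1.support.tail ++ P2.support.tail) := by
      rw [hsupd, h1]; rfl
    rw [this]; rfl
  have hnodup : (P1.support.tail ++ P2.support.tail).Nodup := by
    rw [← htail]; exact hd.support_nodup
  rw [List.nodup_append] at hnodup
  obtain ⟨hn1, hn2, hdisj⟩ := hnodup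
  have hpmem : p ∈ P2.support.tail := by
    have := P2.end_mem_support
    rw [h2, List.mem_cons] at this
    rcases this with h | h
    · exact absurd h hpq
    · exact h
  have hqmem : q ∈ P1.support.tail := by
    have := P1.end_mem_support
    rw [h1, List.mem_cons] at this
    rcases this with h | h
    · exact absurd h hpq.symm
    · exact h
  have hpn1 : p ∉ P1.support.tail := fun h => hdisj _ h _ hpmem rfl
  have hqn2 : q ∉ P2.support.tail := fun h => hdisj _ hqmem _ h rfl
  have hP1path : P1.IsPath := by
    apply Walk.IsPath.mk'
    rw [h1]
    exact List.Nodup.cons hpn1 hn1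
  have hP2path : P2.IsPath := by
    apply Walk.IsPath.mk'
    rw [h2]
    exact List.Nodup.cons hqn2 hn2
  have hedges : d.edges = P1.edges ++ P2.edges := by
    rw [← hspec, Walk.edges_append]
  refine ⟨P1, P2, hP1path, hP2path, ?_, ?_, ?_, ?_, ?_, ?_⟩
  · intro v
    rw [hsupd, List.mem_append]
    constructor
    · rintro (h | h)
      · exact Or.inl h
      · exact Or.inr (by rw [h2]; exact List.mem_cons_of_mem _ h)
    · rintro (h | h)
      · exact Or.inl h
      · rw [h2, List.mem_cons] at h
        rcases h with rfl | h
        · exact Or.inl P1.end_mem_support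
        · exact Or.inr h
  · intro v hv1 hv2
    rw [h1, List.mem_cons] at hv1
    rw [h2, List.mem_cons] at hv2
    rcases hv1 with rfl | hv1
    · exact Or.inl rfl
    · rcases hv2 with rfl | hv2
      · exact Or.inr rfl
      · exact absurd hv2 (fun h => hdisj _ hv1 _ h rfl)
  · intro e he; exact d.edges_takeUntil_subset hq he
  · intro e he; exact d.edges_dropUntil_subset hq he
  · intro e he1 he2
    have : d.edges.Nodup := hd.edges_nodup
    rw [hedges, List.nodup_append] at this
    exact this.2.2 _ he1 _ he2 rfl
  · have := congrArg Walk.length hspec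
    rw [Walk.length_append] at this
    omega

/-- Prefix of a path up to the first vertex in `S`. -/
lemma firsthit {S : Set V} : ∀ {z x : V} (Wk : G.Walk z x), Wk.IsPath → z ∉ S → x ∈ S →
    ∃ (y : V) (E : G.Walk z y), y ∈ S ∧ E.IsPath ∧ (∀ v ∈ E.support, v ∈ Wk.support) ∧
      (∀ e ∈ E.edges, e ∈ Wk.edges) ∧ (∀ v ∈ E.support, v ≠ y → v ∉ S) := by
  intro z x Wk
  induction Wk with
  | nil => intro _ hz hx; exact absurd hx hz
  | @cons u v w h W2 ih =>
    intro hp hz hx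
    by_cases hv : v ∈ S
    · refine ⟨v, Walk.cons h Walk.nil, hv, ?_, ?_, ?_, ?_⟩
      · rw [Walk.cons_isPath_iff]
        exact ⟨Walk.IsPath.nil, by simp [h.ne]⟩
      · intro t ht
        simp only [Walk.support_cons, Walk.support_nil, List.mem_cons,
          List.mem_singleton, List.not_mem_nil, or_false] at ht
        rcases ht with rfl | rfl
        · exact Walk.start_mem_support _
        · rw [Walk.support_cons]
          exact List.mem_cons_of_mem _ W2.start_mem_support
      · intro e he
        simp only [Walk.edges_cons, Walk.edges_nil, List.mem_singleton,
          List.not_mem_nil, or_false, List.mem_cons] at he ⊢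
        exact Or.inl he
      · intro t ht htv
        simp only [Walk.support_cons, Walk.support_nil, List.mem_cons,
          List.mem_singleton, List.not_mem_nil, or_false] at ht
        rcases ht with rfl | rfl
        · exact hz
        · exact absurd rfl htv
    · obtain ⟨y, E2, hy, hE2, hsup, hedg, hint⟩ := ih hp.of_cons hv hx
      have huW2 : u ∉ W2.support := ((Walk.cons_isPath_iff _ _).mp hp).2
      refine ⟨y, Walk.cons h E2, hy, ?_, ?_, ?_, ?_⟩
      · rw [Walk.cons_isPath_iff]
        exact ⟨hE2, fun hu => huW2 (hsup u hu)⟩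
      · intro t ht
        rw [Walk.support_cons, List.mem_cons] at ht ⊢
        rcases ht with rfl | ht
        · exact Or.inl rfl
        · exact Or.inr (hsup t ht)
      · intro e he
        rw [Walk.edges_cons, List.mem_cons] at he ⊢
        rcases he with rfl | he
        · exact Or.inl rfl
        · exact Or.inr (hedg e he)
      · intro t ht hty
        rw [Walk.support_cons, List.mem_cons] at ht
        rcases ht with rfl | ht
        · exact hz
        · exact hint t ht hty

lemma eq_of_length_zero {a b : V} (P : G.Walk a b) (h : P.length = 0) : a = b := by
  cases P with
  | nil => rfl
  | cons h' q => simp [Walk.length_cons] at h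

lemma edges_of_length_one {a b : V} (P : G.Walk a b) (h : P.length = 1) :
    P.edges = [s(a, b)] := by
  cases P with
  | nil => simp at h
  | cons h' q =>
    cases q with
    | nil => simp
    | cons h'' q' => simp only [Walk.length_cons] at h; omega

lemma mem_support_closed {u : V} (c : G.Walk u u) (hc : 0 < c.length) {v : V} :
    v ∈ c.support ↔ v ∈ c.support.tail := by
  cases c with
  | nil => simp at hc
  | cons h q =>
    rw [Walk.support_cons, List.tail_cons, List.mem_cons]
    constructor
    · rintro (rfl | hv)
      · exact q.end_mem_support
      · exact hv
    · exact Or.inr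

lemma mem_support_rotate [DecidableEq V] {u x : V} (c : G.Walk u u) (hc : c.IsCycle) (hx : x ∈ c.support)
    {v : V} : v ∈ (c.rotate _ hx).support ↔ v ∈ c.support := by
  have h1 : 0 < c.length := by have := hc.three_le_length; omega
  have h2 : 0 < (c.rotate _ hx).length := by
    have := (hc.rotate hx).three_le_length; omega
  rw [mem_support_closed _ h1, mem_support_closed _ h2]
  exact (c.support_rotate _ hx).mem_iff

lemma mem_edges_rotate [DecidableEq V] {u x : V} (c : G.Walk u u) (hx : x ∈ c.support) {e : Sym2 V} :
    e ∈ (c.rotate _ hx).edges ↔ e ∈ c.edges :=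
  (c.rotate_edges _ hx).mem_iff

instance : DecidableRel twoK3.Adj := fun a b =>
  decidable_of_iff _ (SimpleGraph.fromRel_adj _ a b).symm

instance : DecidableRel butterfly.Adj := fun a b =>
  decidable_of_iff _ (SimpleGraph.fromRel_adj _ a b).symm

instance : DecidableRel K4minus.Adj := fun a b =>
  decidable_of_iff (a ≠ b ∧ ¬ s(a,b) ∈ ({s(0,1)} : Set (Sym2 (Fin 4)))) (by
    rw [K4minus, SimpleGraph.deleteEdges_adj, SimpleGraph.top_adj])

private def pick6 (X A B Y A2 B2 : Set V) : Fin 6 → Set V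
  | 0 => X | 1 => A | 2 => B | 3 => Y | 4 => A2 | 5 => B2

private def pick5 (A B X A2 B2 : Set V) : Fin 5 → Set V
  | 0 => A | 1 => B | 2 => X | 3 => A2 | 4 => B2

private def pick4 (I1 I2 C2 Q : Set V) : Fin 4 → Set V
  | 0 => I1 | 1 => I2 | 2 => C2 | 3 => Q

lemma minor_twoK3 (X A B Y A2 B2 : Set V)
    (cX : (G.induce X).Connected) (cA : (G.induce A).Connected) (cB : (G.induce B).Connected)
    (cY : (G.induce Y).Connected) (cA2 : (G.induce A2).Connected)
    (cB2 : (G.induce B2).Connected)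
    (dXA : DisjSets X A) (dXB : DisjSets X B) (dAB : DisjSets A B)
    (dXY : DisjSets X Y) (dXA2 : DisjSets X A2) (dXB2 : DisjSets X B2)
    (dAY : DisjSets A Y) (dAA2 : DisjSets A A2) (dAB2 : DisjSets A B2)
    (dBY : DisjSets B Y) (dBA2 : DisjSets B A2) (dBB2 : DisjSets B B2)
    (dYA2 : DisjSets Y A2) (dYB2 : DisjSets Y B2) (dA2B2 : DisjSets A2 B2)
    (eXA : EdgeBtw G X A) (eAB : EdgeBtw G A B) (eBX : EdgeBtw G B X)
    (eYA2 : EdgeBtw G Y A2) (eA2B2 : EdgeBtw G A2 B2) (eB2Y : EdgeBtw G B2 Y) :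
    IsMinor twoK3 G := by
  apply isMinor_of_branchSets twoK3 (pick6 X A B Y A2 B2)
  · intro w1 w2 hne v hv1 hv2
    fin_cases w1 <;> fin_cases w2 <;>
      first
        | exact absurd rfl hne
        | exact dXA v hv1 hv2 | exact dXA v hv2 hv1
        | exact dXB v hv1 hv2 | exact dXB v hv2 hv1
        | exact dAB v hv1 hv2 | exact dAB v hv2 hv1
        | exact dXY v hv1 hv2 | exact dXY v hv2 hv1
        | exact dXA2 v hv1 hv2 | exact dXA2 v hv2 hv1
        | exact dXB2 v hv1 hv2 | exact dXB2 v hv2 hv1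
        | exact dAY v hv1 hv2 | exact dAY v hv2 hv1
        | exact dAA2 v hv1 hv2 | exact dAA2 v hv2 hv1
        | exact dAB2 v hv1 hv2 | exact dAB2 v hv2 hv1
        | exact dBY v hv1 hv2 | exact dBY v hv2 hv1
        | exact dBA2 v hv1 hv2 | exact dBA2 v hv2 hv1
        | exact dBB2 v hv1 hv2 | exact dBB2 v hv2 hv1
        | exact dYA2 v hv1 hv2 | exact dYA2 v hv2 hv1
        | exact dYB2 v hv1 hv2 | exact dYB2 v hv2 hv1
        | exact dA2B2 v hv1 hv2 | exact dA2B2 v hv2 hv1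
  · intro w
    fin_cases w <;> first | exact cX | exact cA | exact cB | exact cY | exact cA2 | exact cB2
  · intro w1 w2 hadj
    fin_cases w1 <;> fin_cases w2 <;>
      first
        | exact absurd hadj (by decide)
        | exact eXA | exact eXA.symm | exact eAB | exact eAB.symm
        | exact eBX | exact eBX.symm | exact eYA2 | exact eYA2.symm
        | exact eA2B2 | exact eA2B2.symm | exact eB2Y | exact eB2Y.symm

lemma minor_butterfly (A B X A2 B2 : Set V)
    (cA : (G.induce A).Connected) (cB : (G.induce B).Connected) (cX : (G.induce X).Connected)
    (cA2 : (G.induce A2).Connected) (cB2 : (G.induce B2).Connected)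
    (dAB : DisjSets A B) (dAX : DisjSets A X) (dBX : DisjSets B X)
    (dAA2 : DisjSets A A2) (dAB2 : DisjSets A B2) (dBA2 : DisjSets B A2)
    (dBB2 : DisjSets B B2) (dXA2 : DisjSets X A2) (dXB2 : DisjSets X B2)
    (dA2B2 : DisjSets A2 B2)
    (eAB : EdgeBtw G A B) (eAX : EdgeBtw G A X) (eBX : EdgeBtw G B X)
    (eXA2 : EdgeBtw G X A2) (eXB2 : EdgeBtw G X B2) (eA2B2 : EdgeBtw G A2 B2) :
    IsMinor butterfly G := by
  apply isMinor_of_branchSets butterfly (pick5 A B X A2 B2)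
  · intro w1 w2 hne v hv1 hv2
    fin_cases w1 <;> fin_cases w2 <;>
      first
        | exact absurd rfl hne
        | exact dAB v hv1 hv2 | exact dAB v hv2 hv1
        | exact dAX v hv1 hv2 | exact dAX v hv2 hv1
        | exact dBX v hv1 hv2 | exact dBX v hv2 hv1
        | exact dAA2 v hv1 hv2 | exact dAA2 v hv2 hv1
        | exact dAB2 v hv1 hv2 | exact dAB2 v hv2 hv1
        | exact dBA2 v hv1 hv2 | exact dBA2 v hv2 hv1
        | exact dBB2 v hv1 hv2 | exact dBB2 v hv2 hv1
        | exact dXA2 v hv1 hv2 | exact dXA2 v hv2 hv1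
        | exact dXB2 v hv1 hv2 | exact dXB2 v hv2 hv1
        | exact dA2B2 v hv1 hv2 | exact dA2B2 v hv2 hv1
  · intro w
    fin_cases w <;> first | exact cA | exact cB | exact cX | exact cA2 | exact cB2
  · intro w1 w2 hadj
    fin_cases w1 <;> fin_cases w2 <;>
      first
        | exact absurd hadj (by decide)
        | exact eAB | exact eAB.symm | exact eAX | exact eAX.symm
        | exact eBX | exact eBX.symm | exact eXA2 | exact eXA2.symm
        | exact eXB2 | exact eXB2.symm | exact eA2B2 | exact eA2B2.symm

lemma minor_K4minus (I1 I2 C2 Q : Set V)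
    (c1 : (G.induce I1).Connected) (c2 : (G.induce I2).Connected)
    (c3 : (G.induce C2).Connected) (c4 : (G.induce Q).Connected)
    (d12 : DisjSets I1 I2) (d13 : DisjSets I1 C2) (d14 : DisjSets I1 Q)
    (d23 : DisjSets I2 C2) (d24 : DisjSets I2 Q) (d34 : DisjSets C2 Q)
    (e02 : EdgeBtw G I1 C2) (e03 : EdgeBtw G I1 Q) (e12 : EdgeBtw G I2 C2)
    (e13 : EdgeBtw G I2 Q) (e23 : EdgeBtw G C2 Q) :
    IsMinor K4minus G := by
  apply isMinor_of_branchSets K4minus (pick4 I1 I2 C2 Q)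
  · intro w1 w2 hne v hv1 hv2
    fin_cases w1 <;> fin_cases w2 <;>
      first
        | exact absurd rfl hne
        | exact d12 v hv1 hv2 | exact d12 v hv2 hv1
        | exact d13 v hv1 hv2 | exact d13 v hv2 hv1
        | exact d14 v hv1 hv2 | exact d14 v hv2 hv1
        | exact d23 v hv1 hv2 | exact d23 v hv2 hv1
        | exact d24 v hv1 hv2 | exact d24 v hv2 hv1
        | exact d34 v hv1 hv2 | exact d34 v hv2 hv1
  · intro w
    fin_cases w <;> first | exact c1 | exact c2 | exact c3 | exact c4
  · intro w1 w2 hadj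
    fin_cases w1 <;> fin_cases w2 <;>
      first
        | exact absurd hadj (by decide)
        | exact e02 | exact e02.symm | exact e03 | exact e03.symm
        | exact e12 | exact e12.symm | exact e13 | exact e13.symm
        | exact e23 | exact e23.symm

lemma forward_aux {u w : V} (c : G.Walk u u) (c' : G.Walk w w) (hc : c.IsCycle)
    (hc' : c'.IsCycle) (e : Sym2 V) (he : e ∈ c'.edges) (hnotc : e ∉ c.edges) :
    IsMinor twoK3 G ∨ IsMinor K4minus G ∨ IsMinor butterfly G := by
  classical
  by_cases hdis : ∀ v ∈ c.support, v ∉ c'.support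
  · -- disjoint cycles: 2K3
    left
    obtain ⟨A, B, cA, cB, dAB, huA, huB, ⟨a1, ha1, hua1⟩, ⟨b1, hb1, hub1⟩,
      ⟨a2, ha2, b2, hb2, hab⟩, hsup⟩ := cycle_split c hc
    obtain ⟨A', B', cA', cB', dA'B', hwA', hwB', ⟨a1', ha1', hwa1'⟩, ⟨b1', hb1', hwb1'⟩,
      ⟨a2', ha2', b2', hb2', hab'⟩, hsup'⟩ := cycle_split c' hc'
    have memc : ∀ v, (v = u ∨ v ∈ A ∨ v ∈ B) → v ∈ c.support := fun v hv => (hsup v).mpr hv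
    have memc' : ∀ v, (v = w ∨ v ∈ A' ∨ v ∈ B') → v ∈ c'.support := fun v hv => (hsup' v).mpr hv
    have cross : ∀ v, (v = u ∨ v ∈ A ∨ v ∈ B) → (v = w ∨ v ∈ A' ∨ v ∈ B') → False :=
      fun v h1 h2 => hdis v (memc v h1) (memc' v h2)
    refine minor_twoK3 {u} A B {w} A' B'
      (connected_induce_singleton u) cA cB (connected_induce_singleton w) cA' cB'
      ?_ ?_ dAB ?_ ?_ ?_ ?_ ?_ ?_ ?_ ?_ ?_ ?_ ?_ dA'B'
      ⟨u, rfl, a1, ha1, hua1⟩ ⟨a2, ha2, b2, hb2, hab⟩ ⟨b1, hb1, u, rfl, hub1.symm⟩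
      ⟨w, rfl, a1', ha1', hwa1'⟩ ⟨a2', ha2', b2', hb2', hab'⟩ ⟨b1', hb1', w, rfl, hwb1'.symm⟩
    · rintro v rfl hv; exact huA hv
    · rintro v rfl hv; exact huB hv
    · rintro v rfl rfl; exact cross v (Or.inl rfl) (Or.inl rfl)
    · rintro v rfl hv; exact cross v (Or.inl rfl) (Or.inr (Or.inl hv))
    · rintro v rfl hv; exact cross v (Or.inl rfl) (Or.inr (Or.inr hv))
    · rintro v hv rfl; exact cross v (Or.inr (Or.inl hv)) (Or.inl rfl)
    · intro v hv hv'; exact cross v (Or.inr (Or.inl hv)) (Or.inr (Or.inl hv'))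
    · intro v hv hv'; exact cross v (Or.inr (Or.inl hv)) (Or.inr (Or.inr hv'))
    · rintro v hv rfl; exact cross v (Or.inr (Or.inr hv)) (Or.inl rfl)
    · intro v hv hv'; exact cross v (Or.inr (Or.inr hv)) (Or.inr (Or.inl hv'))
    · intro v hv hv'; exact cross v (Or.inr (Or.inr hv)) (Or.inr (Or.inr hv'))
    · rintro v rfl hv; exact hwA' hv
    · rintro v rfl hv; exact hwB' hv
  · push_neg at hdis
    obtain ⟨x, hxc, hxc'⟩ := hdis
    right
    by_cases hOff : ∃ z ∈ c'.support, z ∉ c.support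
    · -- c' has a vertex off c
      obtain ⟨z, hz', hzS⟩ := hOff
      have hxd' : x ∈ (c'.rotate _ hz').support := (mem_support_rotate c' hc' hz').mpr hxc'
      have hzx : z ≠ x := fun h => hzS (h ▸ hxc)
      obtain ⟨P1, P2, hP1, hP2, hsup', hint', hE1', hE2', hEdisj', hlen'⟩ :=
        cycle_split_two (c'.rotate _ hz') (hc'.rotate hz') hxd' hzx
      obtain ⟨q, E, hqS, hEpath, hEsup, hEedg, hEint⟩ :=
        firsthit (S := {v | v ∈ c.support}) P1 hP1 hzS hxc
      obtain ⟨p, E', hpS, hE'path, hE'sup, hE'edg, hE'int⟩ :=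
        firsthit (S := {v | v ∈ c.support}) P2.reverse hP2.reverse hzS hxc
      have hE'supP2 : ∀ v ∈ E'.support, v ∈ P2.support := by
        intro v hv
        have := hE'sup v hv
        rwa [Walk.support_reverse, List.mem_reverse] at this
      by_cases hpq : p = q
      · -- the two first hits agree: butterfly
        right
        subst hpq
        have hzq : z ≠ p := fun h => hzS (h ▸ hpS)
        obtain ⟨m2, h2, M2, hM2eq⟩ := Walk.exists_eq_cons_of_ne hzq.symm E.reverse
        obtain ⟨m1, h1, M1, hM1eq⟩ := Walk.exists_eq_cons_of_ne hzq.symm E'.reverse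
        have hM2cons : (Walk.cons h2 M2).IsPath := hM2eq ▸ hEpath.reverse
        have hM1cons : (Walk.cons h1 M1).IsPath := hM1eq ▸ hE'path.reverse
        have hM2path : M2.IsPath := hM2cons.of_cons
        have hM1path : M1.IsPath := hM1cons.of_cons
        have hqM2 : p ∉ M2.support := ((Walk.cons_isPath_iff _ _).mp hM2cons).2
        have hqM1 : p ∉ M1.support := ((Walk.cons_isPath_iff _ _).mp hM1cons).2
        have hM1sub : ∀ v ∈ M1.support, v ∈ E'.support := by
          intro v hv
          have : v ∈ E'.reverse.support := by
            rw [hM1eq, Walk.support_cons]; exact List.mem_cons_of_mem _ hv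
          rwa [Walk.support_reverse, List.mem_reverse] at this
        have hM2sub : ∀ v ∈ M2.support, v ∈ E.support := by
          intro v hv
          have : v ∈ E.reverse.support := by
            rw [hM2eq, Walk.support_cons]; exact List.mem_cons_of_mem _ hv
          rwa [Walk.support_reverse, List.mem_reverse] at this
        have hM1S : ∀ v ∈ M1.support, v ∉ c.support := by
          intro v hv
          exact hE'int v (hM1sub v hv) (fun h => hqM1 (h ▸ hv))
        have hM2S : ∀ v ∈ M2.support, v ∉ c.support := by
          intro v hv
          exact hEint v (hM2sub v hv) (fun h => hqM2 (h ▸ hv))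
        set P := M1.append M2.reverse with hPdef
        have hPsup : P.support = M1.support ++ M2.reverse.support.tail :=
          Walk.support_append _ _
        have hM2revnodup : M2.reverse.support.Nodup := hM2path.reverse.support_nodup
        have hM2revcons : M2.reverse.support = z :: M2.reverse.support.tail :=
          M2.reverse.support_eq_cons
        have hPpath : P.IsPath := by
          apply Walk.IsPath.mk'
          rw [hPsup, List.nodup_append]
          refine ⟨hM1path.support_nodup, ?_, ?_⟩
          · have := hM2revnodup
            rw [hM2revcons, List.nodup_cons] at this
            exact this.2
          · intro v hv1 _ hv2 rfl
            have hvM2 : v ∈ M2.support := by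
              have : v ∈ M2.reverse.support := by
                rw [hM2revcons]; exact List.mem_cons_of_mem _ hv2
              rwa [Walk.support_reverse, List.mem_reverse] at this
            have hvz : v ≠ z := by
              intro hvzeq
              have hnd := hM2revnodup
              rw [hM2revcons, List.nodup_cons] at hnd
              rw [hvzeq] at hv2
              exact hnd.1 hv2
            have hv1P2 : v ∈ P2.support := hE'supP2 v (hM1sub v hv1)
            have hv2P1 : v ∈ P1.support := hEsup v (hM2sub v hvM2)
            rcases hint' v hv2P1 hv1P2 with rfl | rfl
            · exact hvz rfl
            · exact hM1S v hv1 hxc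
        have hPlen : 0 < P.length := by
          by_contra hl
          push_neg at hl
          have hl0 : P.length = 0 := by omega
          rw [hPdef, Walk.length_append, Walk.length_reverse] at hl0
          have hM1l : M1.length = 0 := by omega
          have hM2l : M2.length = 0 := by omega
          have hE'len : E'.length = 1 := by
            have := congrArg Walk.length hM1eq
            rw [Walk.length_reverse, Walk.length_cons, hM1l] at this
            omega
          have hElen : E.length = 1 := by
            have := congrArg Walk.length hM2eq
            rw [Walk.length_reverse, Walk.length_cons, hM2l] at this
            omega
          have he1 : s(z, p) ∈ E.edges := by
            rw [edges_of_length_one E hElen]; exact List.mem_singleton_self _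
          have he2 : s(z, p) ∈ E'.edges := by
            rw [edges_of_length_one E' hE'len]; exact List.mem_singleton_self _
          have hin1 : s(z, p) ∈ P1.edges := hEedg _ he1
          have hin2 : s(z, p) ∈ P2.edges := by
            have := hE'edg _ he2
            rwa [Walk.edges_reverse, List.mem_reverse] at this
          exact hEdisj' _ hin1 hin2
        have hqP : p ∉ P.support := by
          intro hv
          rw [hPsup, List.mem_append] at hv
          rcases hv with hv | hv
          · exact hqM1 hv
          · have : p ∈ M2.support := by
              have : p ∈ M2.reverse.support := by
                rw [hM2revcons]; exact List.mem_cons_of_mem _ hv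
              rwa [Walk.support_reverse, List.mem_reverse] at this
            exact hqM2 this
        have hPS : ∀ v ∈ P.support, v ∉ c.support := by
          intro v hv
          rw [hPsup, List.mem_append] at hv
          rcases hv with hv | hv
          · exact hM1S v hv
          · apply hM2S v
            have : v ∈ M2.reverse.support := by
              rw [hM2revcons]; exact List.mem_cons_of_mem _ hv
            rwa [Walk.support_reverse, List.mem_reverse] at this
        obtain ⟨B2, cB2, hm1B2, hqB2, ⟨b1, hb1, hm1b1⟩, ⟨b2, hb2, hqb2⟩, hPB2⟩ :=
          triangle_split P hPpath hPlen hqP h1 h2.symm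
        obtain ⟨A, B, cA, cB, dAB, hqA, hqB, ⟨a1, ha1, hqa1⟩, ⟨bb1, hbb1, hqbb1⟩,
          ⟨a2, ha2, bb2, hbb2, habb⟩, hsupq⟩ := cycle_split (c.rotate _ hpS) (hc.rotate hpS)
        have hAS : ∀ v ∈ A, v ∈ c.support := fun v hv =>
          (mem_support_rotate c hc hpS).mp ((hsupq v).mpr (Or.inr (Or.inl hv)))
        have hBS : ∀ v ∈ B, v ∈ c.support := fun v hv =>
          (mem_support_rotate c hc hpS).mp ((hsupq v).mpr (Or.inr (Or.inr hv)))
        have hm1P : m1 ∈ P.support := by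
          rw [hPsup, List.mem_append]; exact Or.inl M1.start_mem_support
        have hB2P : ∀ v ∈ B2, v ∈ P.support := fun v hv => (hPB2 v).mpr (Or.inr hv)
        refine minor_butterfly A B {p} {m1} B2 cA cB (connected_induce_singleton p)
          (connected_induce_singleton m1) cB2 dAB ?_ ?_ ?_ ?_ ?_ ?_ ?_ ?_ ?_
          ⟨a2, ha2, bb2, hbb2, habb⟩ ⟨a1, ha1, p, rfl, hqa1.symm⟩
          ⟨bb1, hbb1, p, rfl, hqbb1.symm⟩ ⟨p, rfl, m1, rfl, h1⟩
          ⟨p, rfl, b2, hb2, hqb2⟩ ⟨m1, rfl, b1, hb1, hm1b1⟩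
        · rintro v hv rfl; exact hqA hv
        · rintro v hv rfl; exact hqB hv
        · rintro v hv rfl; exact hPS v hm1P (hAS v hv)
        · intro v hv hv2; exact hPS v (hB2P v hv2) (hAS v hv)
        · rintro v hv rfl; exact hPS v hm1P (hBS v hv)
        · intro v hv hv2; exact hPS v (hB2P v hv2) (hBS v hv)
        · rintro v rfl rfl; exact hPS v hm1P hpS
        · rintro v rfl hv2; exact hPS v (hB2P v hv2) hpS
        · rintro v rfl hv2; exact hm1B2 hv2
      · -- two distinct first hits: theta, K4minus
        left
        set ear := E'.reverse.append E with hEardef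
        have hEarsup : ear.support = E'.reverse.support ++ E.support.tail :=
          Walk.support_append _ _
        have hEcons : E.support = z :: E.support.tail := E.support_eq_cons
        have hEarPath : ear.IsPath := by
          apply Walk.IsPath.mk'
          rw [hEarsup, List.nodup_append]
          refine ⟨hE'path.reverse.support_nodup, ?_, ?_⟩
          · have := hEpath.support_nodup
            rw [hEcons, List.nodup_cons] at this
            exact this.2
          · intro v hv1 _ hv2 rfl
            have hvE' : v ∈ E'.support := by
              rwa [Walk.support_reverse, List.mem_reverse] at hv1
            have hvE : v ∈ E.support := by
              rw [hEcons]; exact List.mem_cons_of_mem _ hv2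
            have hvz : v ≠ z := by
              intro hvzeq
              have hnd := hEpath.support_nodup
              rw [hEcons, List.nodup_cons] at hnd
              rw [hvzeq] at hv2
              exact hnd.1 hv2
            rcases hint' v (hEsup v hvE) (hE'supP2 v hvE') with rfl | rfl
            · exact hvz rfl
            · have hxq : v = q := by
                by_contra hne
                exact hEint v hvE hne hxc
              have hxp : v = p := by
                by_contra hne
                exact hE'int v hvE' hne hxc
              exact hpq (hxp ▸ hxq)
        have hzear : z ∈ ear.support := by
          rw [hEarsup, List.mem_append]
          left
          rw [Walk.support_reverse, List.mem_reverse]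
          exact E'.start_mem_support
        have hEarInt : ∀ v ∈ ear.support, v ≠ p → v ≠ q → v ∉ c.support := by
          intro v hv hvp hvq
          rw [hEarsup, List.mem_append] at hv
          rcases hv with hv | hv
          · exact hE'int v (by rwa [Walk.support_reverse, List.mem_reverse] at hv) hvp
          · exact hEint v (by rw [hEcons]; exact List.mem_cons_of_mem _ hv) hvq
        have hzp : z ≠ p := fun h => hzS (h ▸ hpS)
        have hzq : z ≠ q := fun h => hzS (h ▸ hqS)
        have hEarLen : 2 ≤ ear.length := two_le_length_of_mem ear hzear hzp hzq
        have hq0d : q ∈ (c.rotate _ hpS).support := (mem_support_rotate c hc hpS).mpr hqS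
        obtain ⟨R1, R2, hR1, hR2, hsupd, hintd, hE1d, hE2d, hEdisjd, hlend⟩ :=
          cycle_split_two (c.rotate _ hpS) (hc.rotate hpS) hq0d hpq
        have hdlen3 : 3 ≤ (c.rotate _ hpS).length := (hc.rotate hpS).three_le_length
        have hR1l0 : R1.length ≠ 0 := fun h => hpq (eq_of_length_zero R1 h)
        have hR2l0 : R2.length ≠ 0 := fun h => hpq (eq_of_length_zero R2 h).symm
        have hR1S : ∀ v ∈ R1.support, v ∈ c.support := fun v hv =>
          (mem_support_rotate c hc hpS).mp ((hsupd v).mpr (Or.inl hv))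
        have hR2S : ∀ v ∈ R2.support, v ∈ c.support := fun v hv =>
          (mem_support_rotate c hc hpS).mp ((hsupd v).mpr (Or.inr hv))
        obtain ⟨t, ht, RR, hRReq⟩ := Walk.exists_eq_cons_of_ne (Ne.symm hpq) ear.reverse
        have hRRcons : (Walk.cons ht RR).IsPath := hRReq ▸ hEarPath.reverse
        have hRRpath : RR.IsPath := hRRcons.of_cons
        have hqRR : q ∉ RR.support := ((Walk.cons_isPath_iff _ _).mp hRRcons).2
        have hRRsub : ∀ v ∈ RR.support, v ∈ ear.support := by
          intro v hv
          have : v ∈ ear.reverse.support := by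
            rw [hRReq, Walk.support_cons]; exact List.mem_cons_of_mem _ hv
          rwa [Walk.support_reverse, List.mem_reverse] at this
        have cC2 := connected_induce_support (G := G) RR
        have hpC2 : p ∈ {v | v ∈ RR.support} := RR.end_mem_support
        have htC2 : t ∈ {v | v ∈ RR.support} := RR.start_mem_support
        have hC2S : ∀ v ∈ {v | v ∈ RR.support}, v ∈ c.support → v = p := by
          intro v hv hvS
          by_contra hne
          have hvq : v ≠ q := fun h => hqRR (h ▸ hv)
          exact hEarInt v (hRRsub v hv) hne hvq hvS
        by_cases hl1 : R1.length = 1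
        · have hadjpq : G.Adj p q := adj_of_length_one R1 hl1
          have hR2ge : 2 ≤ R2.length := by omega
          obtain ⟨wa', wb', I1, cI1, hwa', hwb', hawa', hawb', hq0I1, hp0I1, hI1sub⟩ :=
            exists_interior R2 hR2 hR2ge
          obtain ⟨wE1, wE2, I2, cI2, hwE1, hwE2, haE1, haE2, hpI2, hqI2, hI2sub⟩ :=
            exists_interior ear hEarPath hEarLen
          have hI2S : ∀ v ∈ I2, v ∉ c.support := fun v hv =>
            hEarInt v (hI2sub v hv) (fun h => hpI2 (h ▸ hv)) (fun h => hqI2 (h ▸ hv))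
          refine minor_K4minus I1 I2 {p} {q} cI1 cI2
            (connected_induce_singleton p) (connected_induce_singleton q) ?_ ?_ ?_ ?_ ?_ ?_
            ⟨wb', hwb', p, rfl, hawb'⟩ ⟨wa', hwa', q, rfl, hawa'.symm⟩
            ⟨wE1, hwE1, p, rfl, haE1.symm⟩ ⟨wE2, hwE2, q, rfl, haE2⟩
            ⟨p, rfl, q, rfl, hadjpq⟩
          · intro v hv1 hv2; exact hI2S v hv2 (hR2S v (hI1sub v hv1))
          · rintro v hv rfl; exact hp0I1 hv
          · rintro v hv rfl; exact hq0I1 hv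
          · rintro v hv rfl; exact hpI2 hv
          · rintro v hv rfl; exact hqI2 hv
          · rintro v rfl rfl; exact hpq rfl
        · by_cases hl2 : R2.length = 1
          · have hadjqp : G.Adj q p := adj_of_length_one R2 hl2
            have hR1ge : 2 ≤ R1.length := by omega
            obtain ⟨wa, wb, I1, cI1, hwa, hwb, hawa, hawb, hpI1, hqI1, hI1sub⟩ :=
              exists_interior R1 hR1 hR1ge
            obtain ⟨wE1, wE2, I2, cI2, hwE1, hwE2, haE1, haE2, hpI2, hqI2, hI2sub⟩ :=
              exists_interior ear hEarPath hEarLen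
            have hI2S : ∀ v ∈ I2, v ∉ c.support := fun v hv =>
              hEarInt v (hI2sub v hv) (fun h => hpI2 (h ▸ hv)) (fun h => hqI2 (h ▸ hv))
            refine minor_K4minus I1 I2 {p} {q} cI1 cI2
              (connected_induce_singleton p) (connected_induce_singleton q) ?_ ?_ ?_ ?_ ?_ ?_
              ⟨wa, hwa, p, rfl, hawa.symm⟩ ⟨wb, hwb, q, rfl, hawb⟩
              ⟨wE1, hwE1, p, rfl, haE1.symm⟩ ⟨wE2, hwE2, q, rfl, haE2⟩
              ⟨p, rfl, q, rfl, hadjqp.symm⟩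
            · intro v hv1 hv2; exact hI2S v hv2 (hR1S v (hI1sub v hv1))
            · rintro v hv rfl; exact hpI1 hv
            · rintro v hv rfl; exact hqI1 hv
            · rintro v hv rfl; exact hpI2 hv
            · rintro v hv rfl; exact hqI2 hv
            · rintro v rfl rfl; exact hpq rfl
          · have hR1ge : 2 ≤ R1.length := by omega
            have hR2ge : 2 ≤ R2.length := by omega
            obtain ⟨wa, wb, I1, cI1, hwa, hwb, hawa, hawb, hpI1, hqI1, hI1sub⟩ :=
              exists_interior R1 hR1 hR1ge
            obtain ⟨wa', wb', I2, cI2, hwa', hwb', hawa', hawb', hq0I2, hp0I2, hI2sub⟩ :=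
              exists_interior R2 hR2 hR2ge
            refine minor_K4minus I1 I2 {v | v ∈ RR.support} {q} cI1 cI2 cC2
              (connected_induce_singleton q) ?_ ?_ ?_ ?_ ?_ ?_
              ⟨wa, hwa, p, hpC2, hawa.symm⟩ ⟨wb, hwb, q, rfl, hawb⟩
              ⟨wb', hwb', p, hpC2, hawb'⟩ ⟨wa', hwa', q, rfl, hawa'.symm⟩
              ⟨t, htC2, q, rfl, ht.symm⟩
            · intro v hv1 hv2
              rcases hintd v (hI1sub v hv1) (hI2sub v hv2) with rfl | rfl
              · exact hpI1 hv1
              · exact hqI1 hv1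
            · intro v hv1 hv2
              have hvp : v = p := hC2S v hv2 (hR1S v (hI1sub v hv1))
              exact hpI1 (hvp ▸ hv1)
            · rintro v hv rfl; exact hqI1 hv
            · intro v hv1 hv2
              have hvp : v = p := hC2S v hv2 (hR2S v (hI2sub v hv1))
              exact hp0I2 (hvp ▸ hv1)
            · rintro v hv rfl; exact hq0I2 hv
            · rintro v hv rfl; exact hqRR hv


    · -- all of c' lies on c: use the edge e as a chord
      push_neg at hOff
      obtain ⟨⟨p0, q0⟩, rfl⟩ := e.exists_rep
      have hadj0 : G.Adj p0 q0 := c'.adj_of_mem_edges he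
      have hp0 : p0 ∈ c.support := hOff p0 (c'.fst_mem_support_of_mem_edges he)
      have hq0 : q0 ∈ c.support := hOff q0 (c'.snd_mem_support_of_mem_edges he)
      have hpq : p0 ≠ q0 := hadj0.ne
      obtain ⟨R1, R2, hR1, hR2, hsupd, hintd, hE1d, hE2d, _, hlend⟩ :=
        cycle_split_two (c.rotate _ hp0) (hc.rotate hp0)
          ((mem_support_rotate c hc hp0).mpr hq0) hpq
      have hdlen : 3 ≤ (c.rotate _ hp0).length := (hc.rotate hp0).three_le_length
      have hR1len0 : R1.length ≠ 0 := fun h => hpq (eq_of_length_zero R1 h)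
      have hR2len0 : R2.length ≠ 0 := fun h => hpq (eq_of_length_zero R2 h).symm
      have hR1len1 : R1.length ≠ 1 := by
        intro h1
        apply hnotc
        rw [← mem_edges_rotate c hp0]
        apply hE1d
        rw [edges_of_length_one R1 h1]
        exact List.mem_singleton_self _
      have hR2len1 : R2.length ≠ 1 := by
        intro h1
        apply hnotc
        rw [← mem_edges_rotate c hp0]
        apply hE2d
        rw [edges_of_length_one R2 h1]
        rw [Sym2.eq_swap]
        exact List.mem_singleton_self _
      obtain ⟨w1, w2, I1, cI1, hw1, hw2, haw1, haw2, hp0I1, hq0I1, hI1sub⟩ :=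
        exists_interior R1 hR1 (by omega)
      obtain ⟨w1', w2', I2, cI2, hw1', hw2', haw1', haw2', hq0I2, hp0I2, hI2sub⟩ :=
        exists_interior R2 hR2 (by omega)
      left
      refine minor_K4minus I1 I2 {p0} {q0} cI1 cI2
        (connected_induce_singleton p0) (connected_induce_singleton q0)
        ?_ ?_ ?_ ?_ ?_ ?_
        ⟨w1, hw1, p0, rfl, haw1.symm⟩ ⟨w2, hw2, q0, rfl, haw2⟩
        ⟨w2', hw2', p0, rfl, haw2'⟩ ⟨w1', hw1', q0, rfl, haw1'.symm⟩
        ⟨p0, rfl, q0, rfl, hadj0⟩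
      · intro v hv1 hv2
        rcases hintd v (hI1sub v hv1) (hI2sub v hv2) with rfl | rfl
        · exact hp0I1 hv1
        · exact hq0I1 hv1
      · rintro v hv rfl; exact hp0I1 hv
      · rintro v hv rfl; exact hq0I1 hv
      · rintro v hv rfl; exact hp0I2 hv
      · rintro v hv rfl; exact hq0I2 hv
      · rintro v rfl rfl; exact hpq rfl

/-- `obs(S) = {2K₃, K₄⁻, Z}`: a graph has more than one cycle iff it
contains one of `2K₃`, `K₄⁻`, `Z` as a minor. -/
theorem obs_subUnicyclic {V : Type} [Finite V] (G : SimpleGraph V) :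
    ¬ SubUnicyclic G ↔
      (IsMinor twoK3 G ∨ IsMinor K4minus G ∨ IsMinor butterfly G) := by
  constructor
  · intro h
    simp only [SubUnicyclic] at h
    push_neg at h
    obtain ⟨u, w, c, c', hc, hc', e, he⟩ := h
    rcases he with ⟨h1, h2⟩ | ⟨h1, h2⟩
    · exact forward_aux c' c hc' hc e h1 h2
    · exact forward_aux c c' hc hc' e h2 h1
  · exact mpr_main
end

section
/- For every k ≥ 1 and every G in the class Z_k of k-butterfly-cacti, the set K(G) of central vertices of G is the unique set S of k vertices such that G \ S is a forest. -/
open SimpleGraph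

namespace BC

lemma exists_two_nbrs {V : Type*} {G : SimpleGraph V} {u x : V} {c : G.Walk u u}
    (hc : c.IsCycle) (hx : x ∈ c.support) :
    ∃ y z, y ≠ z ∧ G.Adj x y ∧ G.Adj x z := by
  classical
  have hc' := hc.rotate hx
  set c' := c.rotate x hx with hc'def
  clear_value c'
  cases c' with
  | nil => exact absurd rfl hc'.ne_nil
  | cons h p =>
    rename_i y
    rw [Walk.cons_isCycle_iff] at hc'
    obtain ⟨hp, he⟩ := hc'
    have hxy : x ≠ y := h.ne
    obtain ⟨z, h', q, hq⟩ := Walk.exists_eq_cons_of_ne hxy p.reverse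
    have hz : s(x, z) ∈ p.edges := by
      have : s(x, z) ∈ p.reverse.edges := by rw [hq]; simp
      simpa using this
    refine ⟨y, z, ?_, h, h'⟩
    rintro rfl
    exact he hz



def embOf {V W : Type*} {G : SimpleGraph V} {H : SimpleGraph W} (f : V → W)
    (hinj : Function.Injective f) (hadj : ∀ a b, G.Adj a b ↔ H.Adj (f a) (f b)) :
    G ↪g H :=
  ⟨⟨f, hinj⟩, fun {a b} => (hadj a b).symm⟩

lemma acyclic_of_emb {V W : Type*} {G : SimpleGraph V} {H : SimpleGraph W}
    (φ : G ↪g H) (h : H.IsAcyclic) : G.IsAcyclic := by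
  intro u c hc
  exact h (c.map φ.toHom) (hc.map φ.injective)

lemma walk_restrict {W V : Type*} {H : SimpleGraph W} {G : SimpleGraph V} (φ : H ↪g G) :
    ∀ {a b : V} (p : G.Walk a b), (∀ x ∈ p.support, x ∈ Set.range ⇑φ) →
      ∀ {a' b' : W} (ha : a = φ a') (hb : b = φ b'),
      ∃ p' : H.Walk a' b', p.copy ha hb = p'.map φ.toHom := by
  intro a b p
  induction p with
  | nil =>
    intro hsup a' b' ha hb
    obtain rfl : a' = b' := φ.injective (ha.symm.trans hb)
    subst ha
    exact ⟨Walk.nil, by simp⟩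
  | cons h q ih =>
    rename_i u v w
    intro hsup a' b' ha hb
    obtain ⟨v', hv⟩ := hsup v (by simp)
    subst ha hb
    subst hv
    have h' : H.Adj a' v' := φ.map_adj_iff.mp h
    obtain ⟨q', hq'⟩ := ih (fun x hx => hsup x (by simp [hx])) rfl rfl
    refine ⟨Walk.cons h' q', ?_⟩
    simp only [Walk.copy_rfl_rfl] at hq' ⊢
    rw [Walk.map_cons, hq']

lemma acyclic_of_support_range {W V : Type*} {H : SimpleGraph W} {G : SimpleGraph V}
    (φ : H ↪g G) (hH : H.IsAcyclic)
    (hsup : ∀ (u : V) (c : G.Walk u u), c.IsCycle → ∀ x ∈ c.support, x ∈ Set.range ⇑φ) :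
    G.IsAcyclic := by
  intro u c hc
  obtain ⟨u', hu⟩ := hsup u c hc u c.start_mem_support
  obtain ⟨c', hc'⟩ := walk_restrict φ c (hsup u c hc) hu.symm hu.symm
  have h2 : (c'.map φ.toHom).IsCycle := hc' ▸ ((Walk.isCycle_copy _ _).mpr hc)
  exact hH c' ((Walk.map_isCycle_iff_of_injective φ.injective).mp h2)

lemma triangle_not_acyclic {V : Type*} {G : SimpleGraph V} {x y z : V}
    (hxy : G.Adj x y) (hyz : G.Adj y z) (hzx : G.Adj z x) (hxz : x ≠ z) :
    ¬ G.IsAcyclic := by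
  intro h
  refine h (Walk.cons hxy (Walk.cons hyz (Walk.cons hzx Walk.nil))) ?_
  rw [Walk.cons_isCycle_iff]
  constructor
  · rw [Walk.isPath_def]
    simp [Walk.support_cons, List.nodup_cons, hyz.ne, hxz.symm, (hzx.ne), hxy.ne']
  · simp only [Walk.edges_cons, Walk.edges_nil, List.mem_cons, List.not_mem_nil, or_false]
    push_neg
    constructor
    · intro h1
      rw [Sym2.eq_iff] at h1
      rcases h1 with ⟨h1, h2⟩ | ⟨h1, h2⟩
      · exact hxy.ne h1
      · exact hxz h1
    · intro h1
      rw [Sym2.eq_iff] at h1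
      rcases h1 with ⟨h1, h2⟩ | ⟨h1, h2⟩
      · exact hxz h1
      · exact hyz.ne h2


instance : DecidableRel butterfly.Adj := fun a b =>
  decidable_of_iff' _ (SimpleGraph.fromRel_adj _ a b)

lemma triangle_in_induce {V : Type*} {G : SimpleGraph V} {A : Set V} {x y z : V}
    (hx : x ∈ A) (hy : y ∈ A) (hz : z ∈ A)
    (hxy : G.Adj x y) (hyz : G.Adj y z) (hzx : G.Adj z x) (hxz : x ≠ z) :
    ¬ (G.induce A).IsAcyclic := by
  refine triangle_not_acyclic (x := ⟨x, hx⟩) (y := ⟨y, hy⟩) (z := ⟨z, hz⟩) ?_ ?_ ?_ ?_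
  · exact hxy
  · exact hyz
  · exact hzx
  · simp only [ne_eq, Subtype.mk.injEq]
    exact hxz

lemma butterfly_nbr : ∀ a b b' : Fin 5, a ≠ 2 → b ≠ 2 → b' ≠ 2 →
    butterfly.Adj a b → butterfly.Adj a b' → b = b' := by decide

lemma butterfly_acyc : (butterfly.induce ({2} : Set (Fin 5))ᶜ).IsAcyclic := by
  intro u c hc
  obtain ⟨y, z, hne, hy, hz⟩ := exists_two_nbrs hc c.start_mem_support
  have h1 : butterfly.Adj u.1 y.1 := hy
  have h2 : butterfly.Adj u.1 z.1 := hz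
  have := butterfly_nbr u.1 y.1 z.1 u.2 y.2 z.2 h1 h2
  exact hne (Subtype.ext this)

lemma butterfly_hit : ∀ S : Set (Fin 5), (butterfly.induce Sᶜ).IsAcyclic →
    1 ≤ S.ncard ∧ (S.ncard = 1 → S = {2}) := by
  intro S hS
  have a01 : butterfly.Adj 0 1 := by decide
  have a12 : butterfly.Adj 1 2 := by decide
  have a20 : butterfly.Adj 2 0 := by decide
  have a23 : butterfly.Adj 2 3 := by decide
  have a34 : butterfly.Adj 3 4 := by decide
  have a42 : butterfly.Adj 4 2 := by decide
  have hne : S.Nonempty := by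
    by_contra hemp
    rw [Set.not_nonempty_iff_eq_empty] at hemp
    subst hemp
    exact triangle_in_induce (by simp) (by simp) (by simp) a01 a12 a20 (by decide) hS
  refine ⟨(Set.ncard_pos (Set.toFinite S)).mpr hne, ?_⟩
  intro h1
  obtain ⟨a, rfl⟩ := Set.ncard_eq_one.mp h1
  have key : a = 2 := by
    by_contra ha
    fin_cases a
    · exact triangle_in_induce (x := 2) (y := 3) (z := 4)
        (by simp) (by simp) (by simp) a23 a34 a42 (by decide) hS
    · exact triangle_in_induce (x := 2) (y := 3) (z := 4)
        (by simp) (by simp) (by simp) a23 a34 a42 (by decide) hS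
    · exact ha rfl
    · exact triangle_in_induce (x := 0) (y := 1) (z := 2)
        (by simp) (by simp) (by simp) a01 a12 a20 (by decide) hS
    · exact triangle_in_induce (x := 0) (y := 1) (z := 2)
        (by simp) (by simp) (by simp) a01 a12 a20 (by decide) hS
  rw [key]

section AdjLemmas
variable {V' : Type} {G' : SimpleGraph V'} {v : V'}


lemma attach_adj_inl {x y : V'} :
    (attachButterfly G' v).Adj (Sum.inl x) (Sum.inl y) ↔ G'.Adj x y := by
  simp only [attachButterfly, fromRel_adj]
  constructor
  · rintro ⟨hne, h | h⟩ <;>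
      rcases h with ⟨x',y',hx,hy,hadj⟩|⟨h1,h2⟩|⟨h1,h2⟩|⟨h1,h2⟩|⟨h1,h2⟩|⟨h1,h2⟩ <;>
      simp_all [SimpleGraph.adj_comm]
  · intro h
    exact ⟨by simp [h.ne], Or.inl (Or.inl ⟨x, y, rfl, rfl, h⟩)⟩

lemma attach_adj_v0 : (attachButterfly G' v).Adj (Sum.inl v) (Sum.inr 0) := by
  simp [attachButterfly, fromRel_adj]
lemma attach_adj_v1 : (attachButterfly G' v).Adj (Sum.inl v) (Sum.inr 1) := by
  simp [attachButterfly, fromRel_adj]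
lemma attach_adj_01 : (attachButterfly G' v).Adj (Sum.inr 0) (Sum.inr 1) := by
  simp [attachButterfly, fromRel_adj]
lemma attach_adj_23 : (attachButterfly G' v).Adj (Sum.inr 2) (Sum.inr 3) := by
  simp [attachButterfly, fromRel_adj]
lemma attach_adj_21 : (attachButterfly G' v).Adj (Sum.inr 2) (Sum.inr 1) := by
  simp [attachButterfly, fromRel_adj]
lemma attach_adj_31 : (attachButterfly G' v).Adj (Sum.inr 3) (Sum.inr 1) := by
  simp [attachButterfly, fromRel_adj]

lemma attach_nbr0 {b} : (attachButterfly G' v).Adj (Sum.inr 0) b →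
    b = Sum.inl v ∨ b = Sum.inr 1 := by
  simp only [attachButterfly, fromRel_adj]
  rintro ⟨hne, h | h⟩ <;> rcases h with h|h|h|h|h|h <;> simp_all

lemma attach_nbr2 {b} : (attachButterfly G' v).Adj (Sum.inr 2) b →
    b = Sum.inr 3 ∨ b = Sum.inr 1 := by
  simp only [attachButterfly, fromRel_adj]
  rintro ⟨hne, h | h⟩ <;> rcases h with h|h|h|h|h|h <;> simp_all

lemma attach_nbr3 {b} : (attachButterfly G' v).Adj (Sum.inr 3) b →
    b = Sum.inr 2 ∨ b = Sum.inr 1 := by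
  simp only [attachButterfly, fromRel_adj]
  rintro ⟨hne, h | h⟩ <;> rcases h with h|h|h|h|h|h <;> simp_all

end AdjLemmas

lemma sum_decomp {α β : Type*} (S : Set (α ⊕ β)) :
    S = Sum.inl '' (Sum.inl ⁻¹' S) ∪ Sum.inr '' (Sum.inr ⁻¹' S) := by
  ext x; cases x <;> simp

lemma sum_ncard {α β : Type*} [Finite α] [Finite β] (S : Set (α ⊕ β)) :
    S.ncard = (Sum.inl ⁻¹' S).ncard + (Sum.inr ⁻¹' S).ncard := by
  conv_lhs => rw [sum_decomp S]
  rw [Set.ncard_union_eq ?_ (Set.toFinite _) (Set.toFinite _),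
    Set.ncard_image_of_injective _ Sum.inl_injective,
    Set.ncard_image_of_injective _ Sum.inr_injective]
  rw [Set.disjoint_left]
  rintro a ⟨x, -, rfl⟩ ⟨y, -, h⟩
  exact Sum.inl_ne_inr h.symm

lemma attach_master {V' : Type} [Finite V'] {G' : SimpleGraph V'} {v : V'} {K' : Set V'} {k' : ℕ}
    (hv : v ∉ K') (hcard : K'.ncard = k') (hacyc : (G'.induce K'ᶜ).IsAcyclic)
    (huniq : ∀ S' : Set V', (G'.induce S'ᶜ).IsAcyclic → k' ≤ S'.ncard ∧ (S'.ncard = k' → S' = K')) :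
    (Sum.inl '' K' ∪ {Sum.inr 1} : Set (V' ⊕ Fin 4)).ncard = k' + 1 ∧
    ((attachButterfly G' v).induce (Sum.inl '' K' ∪ {Sum.inr 1} : Set (V' ⊕ Fin 4))ᶜ).IsAcyclic ∧
    ∀ S : Set (V' ⊕ Fin 4), ((attachButterfly G' v).induce Sᶜ).IsAcyclic →
      k' + 1 ≤ S.ncard ∧ (S.ncard = k' + 1 → S = Sum.inl '' K' ∪ {Sum.inr 1}) := by
  set A := attachButterfly G' v with hA
  set Kb : Set (V' ⊕ Fin 4) := Sum.inl '' K' ∪ {Sum.inr 1} with hKb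
  have hKbcard : Kb.ncard = k' + 1 := by
    rw [hKb, Set.ncard_union_eq ?_ (Set.toFinite _) (Set.toFinite _),
      Set.ncard_image_of_injective _ Sum.inl_injective, Set.ncard_singleton, hcard]
    rw [Set.disjoint_left]
    rintro a ⟨x, -, rfl⟩ h
    simp at h
  refine ⟨hKbcard, ?_, ?_⟩
  · -- acyclicity of A minus Kb
    have hmem : ∀ x : V', x ∉ K' → (Sum.inl x : V' ⊕ Fin 4) ∈ Kbᶜ := by
      intro x hx
      simp [hKb, hx]
    refine acyclic_of_support_range
      (embOf (G := G'.induce K'ᶜ) (H := A.induce Kbᶜ)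
        (fun x => ⟨Sum.inl x.1, hmem x.1 x.2⟩)
        (fun a b hab => Subtype.ext (Sum.inl_injective (congrArg Subtype.val hab)))
        (fun a b => (attach_adj_inl (G' := G') (v := v) (x := a.1) (y := b.1)).symm)) hacyc ?_
    intro u c hc x hx
    match hxval : x.1, x.2 with
    | Sum.inl w, hx2 =>
      have hw : w ∉ K' := by
        intro hwK
        exact hx2 (Or.inl ⟨w, hwK, rfl⟩)
      exact ⟨⟨w, hw⟩, Subtype.ext hxval.symm⟩
    | Sum.inr i, hx2 =>
      exfalso
      obtain ⟨y, z, hyz, hy, hz⟩ := exists_two_nbrs hc hx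
      have hy' : A.Adj x.1 y.1 := hy
      have hz' : A.Adj x.1 z.1 := hz
      rw [hxval] at hy' hz'
      have hyK : y.1 ∉ Kb := y.2
      have hzK : z.1 ∉ Kb := z.2
      have hr1 : (Sum.inr 1 : V' ⊕ Fin 4) ∈ Kb := Or.inr rfl
      fin_cases i
      · rcases attach_nbr0 hy' with h1 | h1
        · rcases attach_nbr0 hz' with h2 | h2
          · exact hyz (Subtype.ext (h1.trans h2.symm))
          · exact hzK (h2 ▸ hr1)
        · exact hyK (h1 ▸ hr1)
      · exact hx2 hr1
      · rcases attach_nbr2 hy' with h1 | h1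
        · rcases attach_nbr2 hz' with h2 | h2
          · exact hyz (Subtype.ext (h1.trans h2.symm))
          · exact hzK (h2 ▸ hr1)
        · exact hyK (h1 ▸ hr1)
      · rcases attach_nbr3 hy' with h1 | h1
        · rcases attach_nbr3 hz' with h2 | h2
          · exact hyz (Subtype.ext (h1.trans h2.symm))
          · exact hzK (h2 ▸ hr1)
        · exact hyK (h1 ▸ hr1)
  · -- uniqueness / lower bound
    intro S hS
    set S₁ : Set V' := Sum.inl ⁻¹' S with hS₁def
    set S₂ : Set (Fin 4) := Sum.inr ⁻¹' S with hS₂def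
    have hS₁ : (G'.induce S₁ᶜ).IsAcyclic := by
      refine acyclic_of_emb
        (embOf (G := G'.induce S₁ᶜ) (H := A.induce Sᶜ)
          (fun x => ⟨Sum.inl x.1, x.2⟩)
          (fun a b hab => Subtype.ext (Sum.inl_injective (congrArg Subtype.val hab)))
          (fun a b => (attach_adj_inl (G' := G') (v := v) (x := a.1) (y := b.1)).symm)) hS
    have hj : ∃ j : Fin 4, j ∈ S₂ ∧ (j = 1 ∨ j = 2 ∨ j = 3) := by
      by_contra hno
      push_neg at hno
      refine triangle_in_induce (A := Sᶜ)
        (x := (Sum.inr 1 : V' ⊕ Fin 4)) (y := Sum.inr 2) (z := Sum.inr 3)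
        (fun h => (hno 1 h).1 rfl)
        (fun h => (hno 2 h).2.1 rfl)
        (fun h => (hno 3 h).2.2 rfl)
        attach_adj_21.symm attach_adj_23 attach_adj_31 (by simp) hS
    obtain ⟨j, hjS, hj123⟩ := hj
    have hsum : S.ncard = S₁.ncard + S₂.ncard := sum_ncard S
    have h1 : k' ≤ S₁.ncard := (huniq S₁ hS₁).1
    have h2 : 1 ≤ S₂.ncard := (Set.ncard_pos (Set.toFinite _)).mpr ⟨j, hjS⟩
    refine ⟨by omega, ?_⟩
    intro heq
    have hc1 : S₁.ncard = k' := by omega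
    have hc2 : S₂.ncard = 1 := by omega
    have hS₁K : S₁ = K' := (huniq S₁ hS₁).2 hc1
    have hS₂j : S₂ = {j} := by
      obtain ⟨a, ha⟩ := Set.ncard_eq_one.mp hc2
      rw [ha] at hjS ⊢
      rw [hjS]
    have hdec : S = Sum.inl '' S₁ ∪ Sum.inr '' S₂ := sum_decomp S
    have hvS : Sum.inl v ∉ S := by
      intro h
      exact hv (hS₁K ▸ h)
    rcases hj123 with rfl | rfl | rfl
    · rw [hdec, hS₁K, hS₂j, Set.image_singleton]
    · exfalso
      refine triangle_in_induce (A := Sᶜ)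
        (x := (Sum.inl v : V' ⊕ Fin 4)) (y := Sum.inr 0) (z := Sum.inr 1)
        hvS ?_ ?_ attach_adj_v0 attach_adj_01 attach_adj_v1.symm (by simp) hS
      · intro h
        have : (0 : Fin 4) ∈ S₂ := h
        rw [hS₂j] at this
        exact absurd this (by decide)
      · intro h
        have : (1 : Fin 4) ∈ S₂ := h
        rw [hS₂j] at this
        exact absurd this (by decide)
    · exfalso
      refine triangle_in_induce (A := Sᶜ)
        (x := (Sum.inl v : V' ⊕ Fin 4)) (y := Sum.inr 0) (z := Sum.inr 1)
        hvS ?_ ?_ attach_adj_v0 attach_adj_01 attach_adj_v1.symm (by simp) hS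
      · intro h
        have : (0 : Fin 4) ∈ S₂ := h
        rw [hS₂j] at this
        exact absurd this (by decide)
      · intro h
        have : (1 : Fin 4) ∈ S₂ := h
        rw [hS₂j] at this
        exact absurd this (by decide)


lemma iso_symm_image {V W : Type} {G : SimpleGraph V} {H : SimpleGraph W} (e : G ≃g H)
    (S : Set V) : ⇑e.symm '' (⇑e '' S) = S := by
  rw [Set.image_image]
  simp

lemma iso_image_symm_image {V W : Type} {G : SimpleGraph V} {H : SimpleGraph W} (e : G ≃g H)
    (T : Set W) : ⇑e '' (⇑e.symm '' T) = T := by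
  rw [Set.image_image]
  simp

lemma acyc_iso {V W : Type} {G : SimpleGraph V} {H : SimpleGraph W} (e : G ≃g H) (S : Set V) :
    (H.induce (⇑e '' S)ᶜ).IsAcyclic → (G.induce Sᶜ).IsAcyclic := by
  intro h
  refine acyclic_of_emb (embOf (G := G.induce Sᶜ) (H := H.induce (⇑e '' S)ᶜ)
    (fun x => ⟨e x.1, fun hx => ?_⟩) ?_ ?_) h
  · obtain ⟨s, hs, hse⟩ := hx
    exact x.2 (e.injective hse ▸ hs)
  · intro a b hab
    exact Subtype.ext (e.injective (congrArg Subtype.val hab))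
  · intro a b
    exact (e.map_adj_iff).symm

lemma master {V : Type} {k : ℕ} {G : SimpleGraph V} {K : Set V}
    (h : IsBCactus k G K) : Finite V →
    K.ncard = k ∧ (G.induce Kᶜ).IsAcyclic ∧
    ∀ S : Set V, (G.induce Sᶜ).IsAcyclic → k ≤ S.ncard ∧ (S.ncard = k → S = K) := by
  induction h with
  | @base V G e =>
    intro _
    refine ⟨Set.ncard_singleton _, ?_, ?_⟩
    · apply acyc_iso e
      have : ⇑e '' {e.symm butterflyCenter} = {(2 : Fin 5)} := by
        rw [Set.image_singleton]
        simp [butterflyCenter]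
      rw [this]
      exact butterfly_acyc
    · intro S hS
      have hT : (butterfly.induce (⇑e '' S)ᶜ).IsAcyclic := by
        apply acyc_iso e.symm
        rwa [iso_symm_image]
      have hb := butterfly_hit (⇑e '' S) hT
      rw [Set.ncard_image_of_injective _ e.injective] at hb
      refine ⟨hb.1, fun hcard => ?_⟩
      have h2 := hb.2 hcard
      have := congrArg (fun T => ⇑e.symm '' T) h2
      simp only [iso_symm_image] at this
      rw [this, Set.image_singleton, butterflyCenter]
  | @step V V' k G G' S' v hv h' e ih =>
    intro hfin
    haveI : Finite (V' ⊕ Fin 4) := Finite.of_equiv _ e.toEquiv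
    haveI hfin' : Finite V' := Finite.of_injective (Sum.inl : V' → V' ⊕ Fin 4) Sum.inl_injective
    obtain ⟨hc', ha', hu'⟩ := ih hfin'
    obtain ⟨hcK, haK, huK⟩ := attach_master hv hc' ha' hu'
    refine ⟨?_, ?_, ?_⟩
    · rw [Set.ncard_image_of_injective _ e.symm.injective, hcK]
    · apply acyc_iso e
      rw [iso_image_symm_image]
      exact haK
    · intro S hS
      have hT : ((attachButterfly G' v).induce (⇑e '' S)ᶜ).IsAcyclic := by
        apply acyc_iso e.symm
        rwa [iso_symm_image]
      have hb := huK (⇑e '' S) hT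
      rw [Set.ncard_image_of_injective _ e.injective] at hb
      refine ⟨hb.1, fun hcard => ?_⟩
      have h2 := hb.2 hcard
      have := congrArg (fun T => ⇑e.symm '' T) h2
      simp only [iso_symm_image] at this
      exact this

end BC


/-- for `G ∈ Z_k`, the set `K(G)` of central vertices is the unique
set of `k` vertices whose deletion leaves a forest. -/
theorem bcactus_unique_forest_set {V : Type} [Finite V] (k : ℕ) (hk : 1 ≤ k)
    (G : SimpleGraph V) (K : Set V) (h : IsBCactus k G K) :
    ∀ S : Set V, (S.ncard = k ∧ (G.induce Sᶜ).IsAcyclic) ↔ S = K := by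
  obtain ⟨h1, h2, h3⟩ := BC.master h ‹Finite V›
  intro S
  constructor
  · rintro ⟨hcard, hacyc⟩
    exact (h3 S hacyc).2 hcard
  · rintro rfl
    exact ⟨h1, h2⟩
end

section
/- For every nonnegative integer k, the disjoint union of k+2 triangles, (k+2)K_3, is a minor-obstruction for the class of k-apex sub-unicyclic graphs. -/
open SimpleGraph

lemma kT_adj {n : ℕ} {a b : Fin n × Fin 3} :
    (kTriangles n).Adj a b ↔ a ≠ b ∧ a.1 = b.1 := by
  simp [kTriangles, SimpleGraph.fromRel_adj]; tauto

lemma walk_len3 {V : Type} {G : SimpleGraph V} {u : V} (c : G.Walk u u) (h3 : c.length = 3) :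
    ∃ (x y : V) (h1 : G.Adj u x) (h2 : G.Adj x y) (h3' : G.Adj y u),
      c = Walk.cons h1 (Walk.cons h2 (Walk.cons h3' Walk.nil)) := by
  cases c with
  | nil => simp at h3
  | cons h1 p => cases p with
    | nil => simp at h3
    | cons h2 q => cases q with
      | nil => simp at h3
      | cons h3'' r => cases r with
        | nil => exact ⟨_, _, h1, h2, h3'', rfl⟩
        | cons h4 t => simp [Walk.length_cons] at h3

lemma mem_triangle_edges {V : Type} {a b c : V} (hab : a ≠ b) (hbc : b ≠ c) (hca : c ≠ a)
    (e : Sym2 V) : e ∈ [s(a,b), s(b,c), s(c,a)] ↔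
      ∃ p q, p ≠ q ∧ p ∈ [a,b,c] ∧ q ∈ [a,b,c] ∧ e = s(p,q) := by
  constructor
  · intro h
    simp only [List.mem_cons, List.not_mem_nil, or_false] at h
    rcases h with rfl | rfl | rfl
    · exact ⟨a, b, hab, by simp, by simp, rfl⟩
    · exact ⟨b, c, hbc, by simp, by simp, rfl⟩
    · exact ⟨c, a, hca, by simp, by simp, rfl⟩
  · rintro ⟨p, q, hpq, hp, hq, rfl⟩
    simp only [List.mem_cons, List.not_mem_nil, or_false] at hp hq ⊢
    rcases hp with rfl | rfl | rfl <;> rcases hq with rfl | rfl | rfl <;>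
      simp_all [Sym2.eq_iff]

lemma single_conn {W : Type} (H : SimpleGraph W) (x : W) :
    (H.induce {x}).Connected := by
  rw [connected_iff]
  refine ⟨fun u v => ?_, ⟨⟨x, rfl⟩⟩⟩
  have : u = v := Subtype.ext
    ((Set.mem_singleton_iff.mp u.2).trans (Set.mem_singleton_iff.mp v.2).symm)
  rw [this]

lemma four_fin3 : ∀ p q r s : Fin 3, p ≠ q → p ≠ r → p ≠ s → q ≠ r → q ≠ s → r ≠ s → False := by
  intro p q r s
  fin_cases p <;> fin_cases q <;> fin_cases r <;> fin_cases s <;> decide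

lemma three_fin3 : ∀ p q r t : Fin 3, p ≠ q → q ≠ r → p ≠ r → t = p ∨ t = q ∨ t = r := by
  intro p q r t
  fin_cases p <;> fin_cases q <;> fin_cases r <;> fin_cases t <;> decide

lemma tri_adj {W : Type} (H : SimpleGraph W) (a b c : W)
    (hab : H.Adj a b) (hbc : H.Adj b c) (hca : H.Adj c a) :
    ∀ t u : Fin 3, t ≠ u → H.Adj (![a,b,c] t) (![a,b,c] u) := by
  intro t u htu
  fin_cases t <;> fin_cases u <;> simp_all <;>
    first
      | exact hab | exact hab.symm | exact hbc | exact hbc.symm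
      | exact hca | exact hca.symm

lemma tri_val {W α : Type} (g : W → α) (a b c : W) (i : α)
    (h1 : g a = i) (h2 : g b = i) (h3 : g c = i) :
    ∀ t : Fin 3, g (![a,b,c] t) = i := by
  intro t
  fin_cases t <;> simpa

lemma minor_of_system {n : ℕ} {W : Type} (H : SimpleGraph W) (τ : Fin n × Fin 3 → W)
    (τinj : Function.Injective τ)
    (τadj : ∀ (i : Fin n) (t u : Fin 3), t ≠ u → H.Adj (τ (i,t)) (τ (i,u))) :
    IsMinor (kTriangles n) H := by
  classical
  set f' : W → Option (Fin n × Fin 3) := fun w =>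
    if h : ∃ p, τ p = w then some h.choose else none with hf'def
  have hbs : ∀ p, {v | f' v = some p} = {τ p} := by
    intro p
    ext v
    simp only [Set.mem_setOf_eq, Set.mem_singleton_iff, hf'def]
    constructor
    · intro h
      by_cases hv : ∃ q, τ q = v
      · rw [dif_pos hv] at h
        have hs := hv.choose_spec
        rw [Option.some.injEq] at h
        rw [← hs, h]
      · rw [dif_neg hv] at h; cases h
    · rintro rfl
      rw [dif_pos ⟨p, rfl⟩]
      congr 1
      exact τinj (⟨p, rfl⟩ : ∃ q, τ q = τ p).choose_spec
  refine ⟨f', fun p => ?_, fun p q hpq => ?_⟩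
  · rw [hbs p]; exact single_conn H (τ p)
  · obtain ⟨hne', hfst⟩ := kT_adj.mp hpq
    refine ⟨τ p, τ q, ?_, ?_, ?_⟩
    · have hmem : τ p ∈ {v | f' v = some p} := by rw [hbs p]; rfl
      exact hmem
    · have hmem : τ q ∈ {v | f' v = some q} := by rw [hbs q]; rfl
      exact hmem
    · obtain ⟨i, t⟩ := p
      obtain ⟨j, u⟩ := q
      simp only at hfst
      subst hfst
      have htu : t ≠ u := fun h' => hne' (by rw [h'])
      exact τadj i t u htu

lemma part2 (k : ℕ) (W : Type) (H : SimpleGraph W)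
    (hm : IsMinor H (kTriangles (k+2))) (hn : ¬ IsMinor (kTriangles (k+2)) H) :
    KApexSub k H := by
  classical
  obtain ⟨f, hconn, hadj⟩ := hm
  have hne : ∀ w : W, ∃ v, f v = some w := by
    intro w
    obtain ⟨⟨v, hv⟩⟩ := (hconn w).nonempty
    exact ⟨v, hv⟩
  choose rep hrep using hne
  have repinj : Function.Injective rep := by
    intro a b h
    have h2 := hrep a
    rw [h, hrep b] at h2
    exact (Option.some.injEq _ _).mp h2.symm
  set g : W → Fin (k+2) := fun w => (rep w).1 with hgdef
  have walk_fst : ∀ (s : Set (Fin (k+2) × Fin 3)) (x y : ↥s)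
      (p : ((kTriangles (k+2)).induce s).Walk x y), x.val.1 = y.val.1 := by
    intro s x y p
    induction p with
    | nil => rfl
    | cons h p ih => exact (kT_adj.mp h).2.trans ih
  have F1 : ∀ (v : Fin (k+2) × Fin 3) (w : W), f v = some w → v.1 = g w := by
    intro v w hv
    have hr : rep w ∈ {v | f v = some w} := hrep w
    obtain ⟨p⟩ := (hconn w).preconnected ⟨v, hv⟩ ⟨rep w, hr⟩
    exact walk_fst _ _ _ p
  have hHadj : ∀ w₁ w₂ : W, H.Adj w₁ w₂ → g w₁ = g w₂ := by
    intro w₁ w₂ h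
    obtain ⟨v₁, v₂, h1, h2, hadj'⟩ := hadj w₁ w₂ h
    rw [← F1 v₁ w₁ h1, ← F1 v₂ w₂ h2]
    exact (kT_adj.mp hadj').2
  have gp_inj : ∀ w w' : W, g w = g w' → (rep w).2 = (rep w').2 → w = w' := by
    intro w w' h1 h2
    exact repinj (Prod.ext h1 h2)
  have φne : ∀ w w' : W, g w = g w' → w ≠ w' → (rep w).2 ≠ (rep w').2 :=
    fun w w' hg' hne'' hφ => hne'' (gp_inj _ _ hg' hφ)
  set T : Fin (k+2) → Prop := fun i =>
    ∃ a b c : W, H.Adj a b ∧ H.Adj b c ∧ H.Adj c a ∧ g a = i with hTdef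
  have walk_g : ∀ (s : Set W) (x y : ↥s) (p : (H.induce s).Walk x y),
      ∀ v ∈ p.support, g v.val = g x.val := by
    intro s x y p
    induction p with
    | nil => intro v hv; simp at hv; rw [hv]
    | cons h q ih =>
      intro v hv
      rw [Walk.support_cons] at hv
      rcases List.mem_cons.mp hv with rfl | hv'
      · rfl
      · exact (ih v hv').trans (hHadj _ _ h).symm
  have CL : ∀ (s : Set W) (u : ↥s) (c : (H.induce s).Walk u u), c.IsCycle →
      ∃ x y : ↥s, H.Adj u.val x.val ∧ H.Adj x.val y.val ∧ H.Adj y.val u.val ∧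
        g x.val = g u.val ∧ g y.val = g u.val ∧
        (∀ e, e ∈ c.edges ↔ e ∈ [s(u,x), s(x,y), s(y,u)]) := by
    intro s u c hcy
    have hnd : c.support.tail.Nodup := hcy.2
    have hmap : (c.support.tail.map (fun v : ↥s => (rep v.val).2)).Nodup := by
      refine List.Nodup.map_on ?_ hnd
      intro v hv v' hv' hφ
      have h1 := walk_g s u u c v (List.mem_of_mem_tail hv)
      have h2 := walk_g s u u c v' (List.mem_of_mem_tail hv')
      exact Subtype.ext (gp_inj _ _ (h1.trans h2.symm) hφ)
    have hlen3 : c.length ≤ 3 := by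
      have hh := List.Nodup.length_le_card hmap
      rw [List.length_map, List.length_tail, Walk.length_support] at hh
      simpa using hh
    have hlen : c.length = 3 := le_antisymm hlen3 hcy.three_le_length
    obtain ⟨x, y, h1, h2, h3, hc⟩ := walk_len3 c hlen
    subst hc
    refine ⟨x, y, h1, h2, h3, (hHadj _ _ h1).symm, hHadj _ _ h3, fun e => ?_⟩
    simp [Walk.edges_cons]
  by_cases hall : ∀ i, T i
  · exfalso
    apply hn
    rw [hTdef] at hall
    choose a b c hab hbc hca hga using hall
    have hgb : ∀ i, g (b i) = i := fun i => (hHadj _ _ (hab i)).symm.trans (hga i)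
    have hgc : ∀ i, g (c i) = i := fun i => (hHadj _ _ (hbc i)).symm.trans (hgb i)
    have hg3 : ∀ (i : Fin (k+2)) (t : Fin 3), g (![a i, b i, c i] t) = i :=
      fun i => tri_val g _ _ _ i (hga i) (hgb i) (hgc i)
    have τadj : ∀ (i : Fin (k+2)) (t u : Fin 3), t ≠ u →
        H.Adj (![a i, b i, c i] t) (![a i, b i, c i] u) :=
      fun i => tri_adj H _ _ _ (hab i) (hbc i) (hca i)
    refine minor_of_system H (fun p => ![a p.1, b p.1, c p.1] p.2) ?_
      (fun i t u htu => τadj i t u htu)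
    rintro ⟨i, t⟩ ⟨j, u⟩ h
    simp only at h
    have hij : i = j := by
      have e1 := hg3 i t
      have e2 := hg3 j u
      rw [h] at e1
      rw [e1] at e2
      exact e2
    subst hij
    by_contra hne'
    have htu : t ≠ u := fun h' => hne' (by rw [h'])
    exact (τadj i t u htu).ne h
  · push_neg at hall
    obtain ⟨i₀, hi₀⟩ := hall
    by_cases hex : ∃ j, T j
    · obtain ⟨j₀, hj₀⟩ := hex
      have hW : Nonempty W := ⟨hj₀.choose⟩
      set d : Fin (k+2) → W := fun i =>
        if h : T i then h.choose else Classical.arbitrary W with hddef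
      have hd : ∀ i, T i → g (d i) = i := by
        intro i hi
        rw [hddef]
        simp only [dif_pos hi]
        obtain ⟨b', c', _, _, _, hga⟩ := hi.choose_spec
        exact hga
      set TS : Set (Fin (k+2)) := {i | T i ∧ i ≠ j₀} with hTSdef
      have hij₀ : i₀ ≠ j₀ := fun h => hi₀ (h ▸ hj₀)
      have hTSsub : TS ⊆ ({i₀, j₀} : Set (Fin (k+2)))ᶜ := by
        rintro i ⟨hTi, hineq⟩ hmem
        rcases hmem with rfl | rfl
        · exact hi₀ hTi
        · exact hineq rfl
      have hTScard : TS.ncard ≤ k := by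
        have h1 : TS.ncard ≤ (({i₀, j₀} : Set (Fin (k+2)))ᶜ).ncard :=
          Set.ncard_le_ncard hTSsub (Set.toFinite _)
        have h2 := Set.ncard_add_ncard_compl ({i₀, j₀} : Set (Fin (k+2)))
        have h3 : ({i₀, j₀} : Set (Fin (k+2))).ncard = 2 := Set.ncard_pair hij₀
        have h4 : Nat.card (Fin (k+2)) = k + 2 := by simp
        omega
      refine ⟨d '' TS, le_trans (Set.ncard_image_le (Set.toFinite _)) hTScard, ?_⟩
      set S : Set W := d '' TS with hSdef
      have grp : ∀ (u x y : ↥Sᶜ), H.Adj u.val x.val → H.Adj x.val y.val →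
          H.Adj y.val u.val → g u.val = j₀ := by
        intro u x y h1 h2 h3
        have hgx : g x.val = g u.val := (hHadj _ _ h1).symm
        have hgy : g y.val = g u.val := hHadj _ _ h3
        have hTg : T (g u.val) := ⟨u.val, x.val, y.val, h1, h2, h3, rfl⟩
        by_contra hne'
        have hmem : g u.val ∈ TS := ⟨hTg, hne'⟩
        have hdS : d (g u.val) ∈ S := ⟨g u.val, hmem, rfl⟩
        have hgd : g (d (g u.val)) = g u.val := hd _ hTg
        have hdu : d (g u.val) ≠ u.val := fun h => u.2 (h ▸ hdS)
        have hdx : d (g u.val) ≠ x.val := fun h => x.2 (h ▸ hdS)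
        have hdy : d (g u.val) ≠ y.val := fun h => y.2 (h ▸ hdS)
        exact four_fin3 _ _ _ _
          (φne _ _ hgd hdu)
          (φne _ _ (hgd.trans hgx.symm) hdx)
          (φne _ _ (hgd.trans hgy.symm) hdy)
          (φne _ _ hgx.symm h1.ne)
          (φne _ _ hgy.symm h3.ne.symm)
          (φne _ _ (hgx.trans hgy.symm) h2.ne)
      have cover : ∀ (u x y : ↥Sᶜ), H.Adj u.val x.val → H.Adj x.val y.val →
          H.Adj y.val u.val → ∀ z : ↥Sᶜ, g z.val = g u.val → z = u ∨ z = x ∨ z = y := by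
        intro u x y h1 h2 h3 z hz
        have hgx : g x.val = g u.val := (hHadj _ _ h1).symm
        have hgy : g y.val = g u.val := hHadj _ _ h3
        rcases three_fin3 (rep u.val).2 (rep x.val).2 (rep y.val).2 (rep z.val).2
            (φne _ _ hgx.symm h1.ne) (φne _ _ (hgx.trans hgy.symm) h2.ne)
            (φne _ _ hgy.symm h3.ne.symm) with h | h | h
        · exact Or.inl (Subtype.ext (gp_inj _ _ hz h))
        · exact Or.inr (Or.inl (Subtype.ext (gp_inj _ _ (hz.trans hgx.symm) h)))
        · exact Or.inr (Or.inr (Subtype.ext (gp_inj _ _ (hz.trans hgy.symm) h)))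
      intro u w c c' hc hc' e
      obtain ⟨x, y, h1, h2, h3, hgx, hgy, hed⟩ := CL Sᶜ u c hc
      obtain ⟨x', y', h1', h2', h3', hgx', hgy', hed'⟩ := CL Sᶜ w c' hc'
      have hgu : g u.val = j₀ := grp u x y h1 h2 h3
      have hgw : g w.val = j₀ := grp w x' y' h1' h2' h3'
      have memiff : ∀ p : ↥Sᶜ, p ∈ [u, x, y] ↔ p ∈ [w, x', y'] := by
        intro p
        constructor
        · intro hp
          have hgp : g p.val = g w.val := by
            simp only [List.mem_cons, List.not_mem_nil, or_false] at hp
            rcases hp with rfl | rfl | rfl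
            · rw [hgu, hgw]
            · rw [hgx, hgu, hgw]
            · rw [hgy, hgu, hgw]
          rcases cover w x' y' h1' h2' h3' p hgp with rfl | rfl | rfl <;> simp
        · intro hp
          have hgp : g p.val = g u.val := by
            simp only [List.mem_cons, List.not_mem_nil, or_false] at hp
            rcases hp with rfl | rfl | rfl
            · rw [hgw, hgu]
            · rw [hgx', hgw, hgu]
            · rw [hgy', hgw, hgu]
          rcases cover u x y h1 h2 h3 p hgp with rfl | rfl | rfl <;> simp
      have neux : u ≠ x := fun h => h1.ne (congrArg Subtype.val h)
      have nexy : x ≠ y := fun h => h2.ne (congrArg Subtype.val h)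
      have neyu : y ≠ u := fun h => h3.ne (congrArg Subtype.val h)
      have neux' : w ≠ x' := fun h => h1'.ne (congrArg Subtype.val h)
      have nexy' : x' ≠ y' := fun h => h2'.ne (congrArg Subtype.val h)
      have neyu' : y' ≠ w := fun h => h3'.ne (congrArg Subtype.val h)
      rw [hed e, hed' e, mem_triangle_edges neux nexy neyu,
        mem_triangle_edges neux' nexy' neyu']
      constructor
      · rintro ⟨p, q, hpq, hp, hq, rfl⟩
        exact ⟨p, q, hpq, (memiff p).mp hp, (memiff q).mp hq, rfl⟩
      · rintro ⟨p, q, hpq, hp, hq, rfl⟩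
        exact ⟨p, q, hpq, (memiff p).mpr hp, (memiff q).mpr hq, rfl⟩
    · refine ⟨∅, by simp, ?_⟩
      intro u w c c' hc hc' e
      exfalso
      obtain ⟨x, y, h1, h2, h3, _, _, _⟩ := CL ∅ᶜ u c hc
      exact hex ⟨g u.val, u.val, x.val, y.val, h1, h2, h3, rfl⟩

lemma triangle_isCycle {V : Type} {G : SimpleGraph V} {a b c : V}
    (hab : G.Adj a b) (hbc : G.Adj b c) (hca : G.Adj c a) :
    (Walk.cons hab (Walk.cons hbc (Walk.cons hca Walk.nil))).IsCycle := by
  have h1 := hab.ne; have h2 := hbc.ne; have h3 := hca.ne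
  constructor
  · constructor
    · simp [Walk.isTrail_def, Sym2.eq_iff]; tauto
    · simp
  · simp [List.nodup_cons]; tauto

lemma part1 (k : ℕ) : ¬ KApexSub k (kTriangles (k + 2)) := by
  rintro ⟨S, hS, hsub⟩
  -- find two indices avoiding S
  have hfin : S.Finite := Set.toFinite S
  set A : Set (Fin (k+2)) := Prod.fst '' S with hA
  have hAcard : A.ncard ≤ k := le_trans (Set.ncard_image_le hfin) hS
  have hcompl : 1 < Aᶜ.ncard := by
    have := Set.ncard_add_ncard_compl A
    have hcard : Nat.card (Fin (k+2)) = k + 2 := by simp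
    omega
  obtain ⟨i, hi, j, hj, hij⟩ := (Set.one_lt_ncard (Set.toFinite Aᶜ)).mp hcompl
  have hiS : ∀ t : Fin 3, (i, t) ∈ Sᶜ := fun t hv => hi ⟨(i,t), hv, rfl⟩
  have hjS : ∀ t : Fin 3, (j, t) ∈ Sᶜ := fun t hv => hj ⟨(j,t), hv, rfl⟩
  -- build cycles
  set G := (kTriangles (k+2)).induce Sᶜ with hG
  have adj : ∀ (x : Fin (k+2)) (t s : Fin 3) (hx : ∀ t, (x, t) ∈ Sᶜ), t ≠ s →
      G.Adj ⟨(x,t), hx t⟩ ⟨(x,s), hx s⟩ := by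
    intro x t s hx hts
    show (kTriangles (k+2)).Adj (x,t) (x,s)
    rw [kT_adj]
    exact ⟨by simp [hts], rfl⟩
  set c := Walk.cons (adj i 0 1 hiS (by decide)) (Walk.cons (adj i 1 2 hiS (by decide))
    (Walk.cons (adj i 2 0 hiS (by decide)) Walk.nil)) with hcdef
  set c' := Walk.cons (adj j 0 1 hjS (by decide)) (Walk.cons (adj j 1 2 hjS (by decide))
    (Walk.cons (adj j 2 0 hjS (by decide)) Walk.nil)) with hcdef'
  have hc : c.IsCycle := triangle_isCycle _ _ _
  have hc' : c'.IsCycle := triangle_isCycle _ _ _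
  have he : s((⟨(i,0), hiS 0⟩ : ↥Sᶜ), ⟨(i,1), hiS 1⟩) ∈ c.edges := by
    rw [hcdef]; simp
  have hmm := (hsub c c' hc hc' _).mp he
  have hmem := Walk.fst_mem_support_of_mem_edges c' hmm
  rw [hcdef'] at hmem
  simp [Walk.support_cons] at hmem
  exact hij hmem

/-- `(k+2)K₃` is a minor-obstruction for `k`-apex sub-unicyclic graphs. -/
theorem kTriangles_is_obstruction (k : ℕ) : ObstructionSub k (kTriangles (k + 2)) :=
  ⟨part1 k, fun W H hm hn => part2 k W H hm hn⟩
end
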